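/- arXiv:1912.12051 — 6 statements merged into one kernel-verified Lean document; each statement's English description precedes it below -/
import Mathlib

section
/- (Bernstein's inequality in L²) Let n ∈ ℕ and let f(x) = ∑_{k=0}^{n} (a_k cos(kx) + b_k sin(kx)) with real coefficients a_k, b_k. Then ∫_{−π}^{π} f'(x)² dx ≤ n² ∫_{−π}^{π} f(x)² dx. -/
open Real intervalIntegral

lemma int_cos_int (m : ℤ) :
    ∫ x in (-Real.pi)..Real.pi, Real.cos (m * x) = if m = 0 then 2 * Real.pi else 0 := by
  rcases eq_or_ne m 0 with h | h
  · simp [h, two_mul]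
  · rw [if_neg h]
    have hm : (m : ℝ) ≠ 0 := Int.cast_ne_zero.mpr h
    rw [intervalIntegral.integral_comp_mul_left Real.cos hm, integral_cos]
    have h1 : Real.sin (m * Real.pi) = 0 := Real.sin_int_mul_pi m
    have h2 : Real.sin (m * -Real.pi) = 0 := by
      rw [mul_neg, Real.sin_neg, h1, neg_zero]
    simp [h1, h2]

lemma int_sin_int (m : ℤ) :
    ∫ x in (-Real.pi)..Real.pi, Real.sin (m * x) = 0 := by
  rcases eq_or_ne m 0 with h | h
  · simp [h]
  · have hm : (m : ℝ) ≠ 0 := Int.cast_ne_zero.mpr h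
    rw [intervalIntegral.integral_comp_mul_left Real.sin hm, integral_sin]
    have h1 : Real.cos (m * Real.pi) = Real.cos (m * -Real.pi) := by
      rw [mul_neg, Real.cos_neg]
    rw [← h1, sub_self, smul_zero]

lemma ii_cos (m : ℤ) (c : ℝ) :
    IntervalIntegrable (fun x => c * Real.cos (m * x)) MeasureTheory.volume (-Real.pi) Real.pi :=
  (by fun_prop : Continuous fun x : ℝ => c * Real.cos (m * x)).intervalIntegrable _ _

lemma ii_sin (m : ℤ) (c : ℝ) :
    IntervalIntegrable (fun x => c * Real.sin (m * x)) MeasureTheory.volume (-Real.pi) Real.pi :=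
  (by fun_prop : Continuous fun x : ℝ => c * Real.sin (m * x)).intervalIntegrable _ _

lemma prod_int (j k : ℕ) (p q r s : ℝ) :
    ∫ x in (-Real.pi)..Real.pi,
      (p * Real.cos (j * x) + q * Real.sin (j * x)) * (r * Real.cos (k * x) + s * Real.sin (k * x))
    = if j = k then (if j = 0 then 2 * Real.pi * (p * r) else Real.pi * (p * r + q * s)) else 0 := by
  have key : ∀ x : ℝ,
      (p * Real.cos (j * x) + q * Real.sin (j * x)) * (r * Real.cos (k * x) + s * Real.sin (k * x))
      = (p * r + q * s) / 2 * Real.cos ((((j : ℤ) - (k : ℤ) : ℤ) : ℝ) * x)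
        + ((p * r - q * s) / 2 * Real.cos ((((j : ℤ) + (k : ℤ) : ℤ) : ℝ) * x)
        + ((q * r + p * s) / 2 * Real.sin ((((j : ℤ) + (k : ℤ) : ℤ) : ℝ) * x)
        + (q * r - p * s) / 2 * Real.sin ((((j : ℤ) - (k : ℤ) : ℤ) : ℝ) * x))) := by
    intro x
    push_cast
    simp only [sub_mul, add_mul, Real.cos_sub, Real.cos_add, Real.sin_add, Real.sin_sub]
    ring
  simp only [key]
  rw [intervalIntegral.integral_add (ii_cos _ _) ((ii_cos _ _).add ((ii_sin _ _).add (ii_sin _ _))),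
    intervalIntegral.integral_add (ii_cos _ _) ((ii_sin _ _).add (ii_sin _ _)),
    intervalIntegral.integral_add (ii_sin _ _) (ii_sin _ _),
    intervalIntegral.integral_const_mul, intervalIntegral.integral_const_mul,
    intervalIntegral.integral_const_mul, intervalIntegral.integral_const_mul,
    int_cos_int, int_cos_int, int_sin_int, int_sin_int]
  rcases eq_or_ne j k with hjk | hjk
  · subst hjk
    rcases eq_or_ne j 0 with hj | hj
    · subst hj; norm_num; ring
    · have h1 : (j : ℤ) - j = 0 := by ring
      have h2 : (j : ℤ) + j ≠ 0 := by
        simpa using fun h => hj (by exact_mod_cast h)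
      rw [if_pos rfl, if_neg hj, if_pos h1, if_neg h2]
      ring
  · have h1 : (j : ℤ) - k ≠ 0 := by
      intro h; exact hjk (by omega)
    have h2 : (j : ℤ) + k ≠ 0 := by
      intro h
      have : j = 0 ∧ k = 0 := by omega
      exact hjk (this.1.trans this.2.symm)
    rw [if_neg hjk, if_neg h1, if_neg h2]
    ring

lemma ii_trig (p q : ℕ → ℝ) (j : ℕ) :
    IntervalIntegrable (fun x => p j * Real.cos (j * x) + q j * Real.sin (j * x))
      MeasureTheory.volume (-Real.pi) Real.pi :=
  (by fun_prop : Continuous fun x : ℝ => p j * Real.cos (j * x) + q j * Real.sin (j * x)).intervalIntegrable _ _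

lemma sq_sum_int (n : ℕ) (p q : ℕ → ℝ) :
    ∫ x in (-Real.pi)..Real.pi,
      (∑ k ∈ Finset.range (n + 1), (p k * Real.cos (k * x) + q k * Real.sin (k * x))) ^ 2
    = ∑ k ∈ Finset.range (n + 1),
        (if k = 0 then 2 * Real.pi * (p 0) ^ 2 else Real.pi * ((p k) ^ 2 + (q k) ^ 2)) := by
  have e1 : ∀ x : ℝ,
      (∑ k ∈ Finset.range (n + 1), (p k * Real.cos (k * x) + q k * Real.sin (k * x))) ^ 2
      = ∑ j ∈ Finset.range (n + 1), ∑ k ∈ Finset.range (n + 1),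
          (p j * Real.cos (j * x) + q j * Real.sin (j * x))
            * (p k * Real.cos (k * x) + q k * Real.sin (k * x)) := by
    intro x; rw [sq, Finset.sum_mul_sum]
  simp only [e1]
  have hint : ∀ j : ℕ, ∀ k : ℕ, IntervalIntegrable
      (fun x => (p j * Real.cos (j * x) + q j * Real.sin (j * x))
        * (p k * Real.cos (k * x) + q k * Real.sin (k * x)))
      MeasureTheory.volume (-Real.pi) Real.pi := fun j k =>
    (by fun_prop : Continuous fun x : ℝ => (p j * Real.cos (j * x) + q j * Real.sin (j * x))
        * (p k * Real.cos (k * x) + q k * Real.sin (k * x))).intervalIntegrable _ _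
  have hint2 : ∀ j : ℕ, IntervalIntegrable
      (fun x => ∑ k ∈ Finset.range (n + 1), (p j * Real.cos (j * x) + q j * Real.sin (j * x))
        * (p k * Real.cos (k * x) + q k * Real.sin (k * x)))
      MeasureTheory.volume (-Real.pi) Real.pi := fun j =>
    (continuous_finset_sum _ fun k _ => (by fun_prop : Continuous fun x : ℝ =>
      (p j * Real.cos (j * x) + q j * Real.sin (j * x))
        * (p k * Real.cos (k * x) + q k * Real.sin (k * x)))).intervalIntegrable _ _
  rw [intervalIntegral.integral_finset_sum (fun j _ => hint2 j)]
  calc ∑ j ∈ Finset.range (n + 1), ∫ x in (-Real.pi)..Real.pi,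
        ∑ k ∈ Finset.range (n + 1),
          (p j * Real.cos (j * x) + q j * Real.sin (j * x))
            * (p k * Real.cos (k * x) + q k * Real.sin (k * x))
      = ∑ j ∈ Finset.range (n + 1), ∑ k ∈ Finset.range (n + 1),
          (if j = k then (if j = 0 then 2 * Real.pi * (p j * p k)
            else Real.pi * (p j * p k + q j * q k)) else 0) := by
        refine Finset.sum_congr rfl fun j hj => ?_
        rw [intervalIntegral.integral_finset_sum (fun k _ => hint j k)]
        exact Finset.sum_congr rfl fun k hk => prod_int j k (p j) (q j) (p k) (q k)
    _ = ∑ k ∈ Finset.range (n + 1),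
        (if k = 0 then 2 * Real.pi * (p 0) ^ 2 else Real.pi * ((p k) ^ 2 + (q k) ^ 2)) := by
        refine Finset.sum_congr rfl fun j hj => ?_
        rw [Finset.sum_ite_eq, if_pos hj]
        split_ifs with h
        · subst h; ring
        · ring

theorem stmt2 (n : ℕ) (a b : ℕ → ℝ) (f : ℝ → ℝ)
    (hf : ∀ x, f x = ∑ k ∈ Finset.range (n + 1),
      (a k * Real.cos (k * x) + b k * Real.sin (k * x))) :
    ∫ x in (-Real.pi)..Real.pi, (deriv f x) ^ 2
      ≤ (n : ℝ) ^ 2 * ∫ x in (-Real.pi)..Real.pi, (f x) ^ 2 := by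
  have hf' : f = fun x => ∑ k ∈ Finset.range (n + 1),
      (a k * Real.cos (k * x) + b k * Real.sin (k * x)) := funext hf
  have hderiv : ∀ x : ℝ, deriv f x = ∑ k ∈ Finset.range (n + 1),
      ((k : ℝ) * b k * Real.cos (k * x) + -((k : ℝ) * a k) * Real.sin (k * x)) := by
    intro x
    have hD : HasDerivAt f (∑ k ∈ Finset.range (n + 1),
        ((k : ℝ) * b k * Real.cos (k * x) + -((k : ℝ) * a k) * Real.sin (k * x))) x := by
      rw [hf']
      apply HasDerivAt.fun_sum
      intro k hk
      have h1 : HasDerivAt (fun y : ℝ => (k : ℝ) * y) (k : ℝ) x := by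
        simpa using (hasDerivAt_id x).const_mul (k : ℝ)
      have hc := (h1.cos).const_mul (a k)
      have hs := (h1.sin).const_mul (b k)
      convert hc.fun_add hs using 1
      ring
    exact hD.deriv
  have hL := sq_sum_int n (fun k => (k : ℝ) * b k) (fun k => -((k : ℝ) * a k))
  have hR := sq_sum_int n a b
  calc ∫ x in (-Real.pi)..Real.pi, (deriv f x) ^ 2
      = ∑ k ∈ Finset.range (n + 1),
          (if k = 0 then 2 * Real.pi * (((0 : ℕ) : ℝ) * b 0) ^ 2
            else Real.pi * (((k : ℝ) * b k) ^ 2 + (-((k : ℝ) * a k)) ^ 2)) := by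
        simp only [hderiv]
        exact hL
    _ ≤ (n : ℝ) ^ 2 * ∑ k ∈ Finset.range (n + 1),
          (if k = 0 then 2 * Real.pi * (a 0) ^ 2 else Real.pi * ((a k) ^ 2 + (b k) ^ 2)) := by
        rw [Finset.mul_sum]
        apply Finset.sum_le_sum
        intro k hk
        split_ifs with h
        · subst h
          simp only [Nat.cast_zero, zero_mul, ne_eq, OfNat.ofNat_ne_zero,
            not_false_eq_true, zero_pow, mul_zero]
          positivity
        · have h1 : (k : ℝ) ^ 2 ≤ (n : ℝ) ^ 2 := by
            have : (k : ℝ) ≤ (n : ℝ) := by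
              exact_mod_cast Nat.lt_succ_iff.mp (Finset.mem_range.mp hk)
            nlinarith [Nat.cast_nonneg (α := ℝ) k]
          calc Real.pi * (((k : ℝ) * b k) ^ 2 + (-((k : ℝ) * a k)) ^ 2)
              = (k : ℝ) ^ 2 * (Real.pi * ((a k) ^ 2 + (b k) ^ 2)) := by ring
            _ ≤ (n : ℝ) ^ 2 * (Real.pi * ((a k) ^ 2 + (b k) ^ 2)) :=
                mul_le_mul_of_nonneg_right h1 (by positivity)
    _ = (n : ℝ) ^ 2 * ∫ x in (-Real.pi)..Real.pi, (f x) ^ 2 := by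
        simp only [hf]
        rw [hR]
end

section
/- Let P be a real trigonometric polynomial of degree at most n, let I be a closed bounded interval of length r, and suppose P has at least m zeros in I counting multiplicities. Then max_{θ∈I} |P(θ)| ≤ (4er/m)^m · max_{x∈I} |P^{(m)}(x)|, where P^{(m)} is the m-th derivative of P. -/
open Real

/-- `P` has at least `m` zeros in `I`, counting multiplicities. -/
def HasZerosWithMult (P : ℝ → ℝ) (I : Set ℝ) (m : ℕ) : Prop :=
  ∃ (k : ℕ) (y : Fin k → ℝ) (mult : Fin k → ℕ),
    Function.Injective y ∧ (∀ i, y i ∈ I) ∧ (∀ i, 0 < mult i) ∧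
    (∑ i, mult i) = m ∧ ∀ i : Fin k, ∀ j < mult i, iteratedDeriv j P (y i) = 0

lemma hasZeros_of_fintype {P : ℝ → ℝ} {I : Set ℝ} {m : ℕ} {ι : Type} [Fintype ι]
    (y : ι → ℝ) (mult : ι → ℕ) (hy : Function.Injective y) (hmem : ∀ i, y i ∈ I)
    (hsum : ∑ i, mult i = m) (hzero : ∀ i, ∀ j < mult i, iteratedDeriv j P (y i) = 0) :
    HasZerosWithMult P I m := by
  classical
  set s : Finset ι := Finset.univ.filter (fun i => 0 < mult i) with hs
  let e : Fin s.card ≃ {x // x ∈ s} := s.equivFin.symm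
  refine ⟨s.card, fun i => y (e i), fun i => mult (e i), ?_, fun i => hmem _, ?_, ?_, fun i => hzero _⟩
  · intro i j h
    exact e.injective (Subtype.ext (hy h))
  · intro i
    have := (e i).2
    exact (Finset.mem_filter.mp this).2
  · rw [← hsum]
    have h1 : ∑ i : Fin s.card, mult ((e i) : ι) = ∑ x : {x // x ∈ s}, mult x :=
      e.sum_comp (fun x : {x // x ∈ s} => mult x)
    rw [h1]
    rw [← Finset.sum_subtype s (fun x => by simp [hs]) mult]
    exact Finset.sum_filter_of_ne (fun x _ hx => Nat.pos_of_ne_zero hx)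

lemma hasZeros_sorted {P : ℝ → ℝ} {I : Set ℝ} {m : ℕ} (h : HasZerosWithMult P I m) :
    ∃ (k : ℕ) (y : Fin k → ℝ) (mult : Fin k → ℕ), StrictMono y ∧ (∀ i, y i ∈ I) ∧
      (∀ i, 0 < mult i) ∧ (∑ i, mult i) = m ∧
      ∀ i, ∀ j < mult i, iteratedDeriv j P (y i) = 0 := by
  classical
  obtain ⟨k, y, mult, hy, hmem, hpos, hsum, hz⟩ := h
  set s : Finset ℝ := Finset.univ.image y with hs
  have hcard : s.card = k := by
    rw [hs, Finset.card_image_of_injective _ hy, Finset.card_univ, Fintype.card_fin]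
  let o := s.orderIsoOfFin hcard
  have hmemrange : ∀ i, ∃ j, y j = (o i : ℝ) := by
    intro i
    have h2 := (o i).2
    obtain ⟨j, _, hj⟩ := Finset.mem_image.mp h2
    exact ⟨j, hj⟩
  choose g hg using hmemrange
  have hginj : Function.Injective g := by
    intro i j hij
    apply o.injective
    apply Subtype.ext
    rw [← hg i, ← hg j, hij]
  have hgbij : Function.Bijective g := Finite.injective_iff_bijective.mp hginj
  refine ⟨k, fun i => y (g i), fun i => mult (g i), ?_, fun i => hmem _, fun i => hpos _, ?_,
    fun i => hz _⟩
  · intro i j hij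
    have h3 : o i < o j := o.strictMono hij
    have : (o i : ℝ) < (o j : ℝ) := h3
    simpa [hg] using this
  · rw [← hsum]
    exact (Equiv.ofBijective g hgbij).sum_comp (fun i => mult i)

lemma rolle_step {f : ℝ → ℝ} {u v : ℝ} {m : ℕ} (hf : Continuous f)
    (h : HasZerosWithMult f (Set.Icc u v) (m + 1)) :
    HasZerosWithMult (deriv f) (Set.Icc u v) m := by
  classical
  obtain ⟨k, y, mult, hy, hmem, hpos, hsum, hz⟩ := hasZeros_sorted h
  match k, y, mult, hy, hmem, hpos, hsum, hz with
  | 0, y, mult, hy, hmem, hpos, hsum, hz => simp at hsum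
  | k + 1, y, mult, hy, hmem, hpos, hsum, hz =>
    have hy0 : ∀ i, f (y i) = 0 := by
      intro i
      have := hz i 0 (hpos i)
      simpa using this
    have hroll : ∀ i : Fin k, ∃ c ∈ Set.Ioo (y i.castSucc) (y i.succ), deriv f c = 0 := by
      intro i
      exact exists_deriv_eq_zero (hy (show i.castSucc < i.succ from Fin.castSucc_lt_succ)) hf.continuousOn
        ((hy0 _).trans (hy0 _).symm)
    choose z hz1 hz2 using hroll
    apply hasZeros_of_fintype (ι := Fin (k + 1) ⊕ Fin k)
      (Sum.elim y z) (Sum.elim (fun i => mult i - 1) (fun _ => 1))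
    · intro i j hij
      match i, j with
      | Sum.inl i, Sum.inl j => exact congrArg _ (hy.injective hij)
      | Sum.inr i, Sum.inr j =>
        simp only [Sum.elim_inr] at hij
        rcases lt_trichotomy i j with h' | h' | h'
        · exfalso
          have hle : (i.succ : Fin (k+1)) ≤ j.castSucc := by
            simp only [Fin.le_def, Fin.val_succ, Fin.coe_castSucc]; omega
          have : z i < z j := lt_trans (lt_of_lt_of_le (hz1 i).2 (hy.monotone hle)) (hz1 j).1
          exact absurd hij this.ne
        · exact congrArg _ h'
        · exfalso
          have hle : (j.succ : Fin (k+1)) ≤ i.castSucc := by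
            simp only [Fin.le_def, Fin.val_succ, Fin.coe_castSucc]; omega
          have : z j < z i := lt_trans (lt_of_lt_of_le (hz1 j).2 (hy.monotone hle)) (hz1 i).1
          exact absurd hij.symm this.ne
      | Sum.inl i, Sum.inr j =>
        exfalso
        simp only [Sum.elim_inl, Sum.elim_inr] at hij
        rcases le_or_gt (i : ℕ) (j : ℕ) with h' | h'
        · have hle : i ≤ j.castSucc := by
            simp only [Fin.le_def, Fin.coe_castSucc]; omega
          have : y i ≤ y j.castSucc := hy.monotone hle
          exact absurd hij (lt_of_le_of_lt this (hz1 j).1).ne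
        · have hle : (j.succ : Fin (k+1)) ≤ i := by
            simp only [Fin.le_def, Fin.val_succ]; omega
          have : y j.succ ≤ y i := hy.monotone hle
          exact absurd hij (lt_of_lt_of_le (hz1 j).2 this).ne'
      | Sum.inr i, Sum.inl j =>
        exfalso
        simp only [Sum.elim_inl, Sum.elim_inr] at hij
        rcases le_or_gt (j : ℕ) (i : ℕ) with h' | h'
        · have hle : j ≤ i.castSucc := by
            simp only [Fin.le_def, Fin.coe_castSucc]; omega
          have : y j ≤ y i.castSucc := hy.monotone hle
          exact absurd hij (lt_of_le_of_lt this (hz1 i).1).ne'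
        · have hle : (i.succ : Fin (k+1)) ≤ j := by
            simp only [Fin.le_def, Fin.val_succ]; omega
          have : y i.succ ≤ y j := hy.monotone hle
          exact absurd hij (lt_of_lt_of_le (hz1 i).2 this).ne
    · intro i
      match i with
      | Sum.inl i => exact hmem i
      | Sum.inr i =>
        have h1 := (hmem i.castSucc).1
        have h2 := (hmem i.succ).2
        have h3 := (hz1 i).1
        have h4 := (hz1 i).2
        simp only [Sum.elim_inr]
        exact ⟨by linarith, by linarith⟩
    · rw [Fintype.sum_sum_type]
      simp only [Sum.elim_inl, Sum.elim_inr, Finset.sum_const, Finset.card_univ,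
        Fintype.card_fin, smul_eq_mul, mul_one]
      have h5 : ∑ i, (mult i - 1 + 1) = ∑ i, mult i :=
        Finset.sum_congr rfl (fun i _ => by have := hpos i; omega)
      rw [Finset.sum_add_distrib] at h5
      simp only [Finset.sum_const, Finset.card_univ, Fintype.card_fin, smul_eq_mul,
        mul_one] at h5
      omega
    · intro i j hj
      match i with
      | Sum.inl i =>
        simp only [Sum.elim_inl] at hj ⊢
        rw [← iteratedDeriv_succ']
        exact hz i (j + 1) (by omega)
      | Sum.inr i =>
        simp only [Sum.elim_inr] at hj ⊢
        interval_cases j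
        simpa using hz2 i

section PolyAux
open Polynomial

lemma polyContDiff (p : Polynomial ℝ) : ContDiff ℝ (⊤ : ℕ∞) fun x => p.eval x := by
  have : (fun x => p.eval x) = fun x : ℝ => ∑ i ∈ Finset.range (p.natDegree + 1), p.coeff i * x ^ i :=
    funext fun x => p.eval_eq_sum_range x
  rw [this]
  exact ContDiff.sum fun i _ => contDiff_const.mul (contDiff_id.pow i)

lemma iteratedDeriv_polyeval (j : ℕ) : ∀ (p : Polynomial ℝ),
    iteratedDeriv j (fun x => p.eval x) = fun x => (Polynomial.derivative^[j] p).eval x := by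
  induction j with
  | zero => intro p; simp
  | succ j ih =>
    intro p
    rw [iteratedDeriv_succ', Function.iterate_succ_apply]
    rw [show deriv (fun x => p.eval x) = fun x => (Polynomial.derivative p).eval x from
      funext fun x => Polynomial.deriv p]
    exact ih _

lemma pow_dvd_iterate_deriv {a : ℝ} (s j : ℕ) (p : Polynomial ℝ)
    (h : (X - C a) ^ s ∣ p) (hj : j ≤ s) :
    (X - C a) ^ (s - j) ∣ Polynomial.derivative^[j] p := by
  induction j generalizing p s with
  | zero => simpa using h
  | succ j ih =>
    obtain ⟨q, rfl⟩ := h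
    have hs : s - (j+1) = (s - 1) - j := by omega
    rw [Function.iterate_succ_apply, hs]
    apply ih (s-1) _ _ (by omega)
    rw [Polynomial.derivative_mul, Polynomial.derivative_pow]
    simp only [Polynomial.derivative_sub, Polynomial.derivative_X, Polynomial.derivative_C,
      sub_zero, mul_one]
    exact dvd_add (Dvd.dvd.mul_right (Dvd.dvd.mul_left (pow_dvd_pow _ (by omega)) _) _)
      (Dvd.dvd.mul_right (pow_dvd_pow _ (by omega)) _)

lemma eval_iterate_deriv_zero {a : ℝ} {s j : ℕ} (p : Polynomial ℝ)
    (h : (X - C a) ^ s ∣ p) (hj : j < s) :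
    (Polynomial.derivative^[j] p).eval a = 0 := by
  obtain ⟨q, hq⟩ := pow_dvd_iterate_deriv s j p h hj.le
  rw [hq]
  have : s - j ≠ 0 := by omega
  obtain ⟨t, ht⟩ := Nat.exists_eq_succ_of_ne_zero this
  simp [ht, pow_succ]

lemma iter_deriv_eq_C : ∀ (m : ℕ) (W : Polynomial ℝ), W.natDegree ≤ m →
    Polynomial.derivative^[m] W = Polynomial.C ((m.factorial : ℝ) * W.coeff m) := by
  intro m
  induction m with
  | zero =>
    intro W hW
    simpa using (Polynomial.eq_C_of_natDegree_le_zero hW)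
  | succ m ih =>
    intro W hW
    rw [Function.iterate_succ_apply]
    rw [ih _ ((Polynomial.natDegree_derivative_le W).trans (by omega))]
    rw [Polynomial.coeff_derivative]
    congr 1
    rw [Nat.factorial_succ]
    push_cast
    ring

end PolyAux

lemma exists_iter_zero {u v : ℝ} :
    ∀ (p : ℕ) (f : ℝ → ℝ), ContDiff ℝ (⊤ : ℕ∞) f →
      HasZerosWithMult f (Set.Icc u v) (p + 1) → ∃ ξ ∈ Set.Icc u v, iteratedDeriv p f ξ = 0 := by
  intro p
  induction p with
  | zero =>
    rintro f hf ⟨k, y, mult, hy, hmem, hpos, hsum, hz⟩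
    have hk : k ≠ 0 := by rintro rfl; simp at hsum
    have i : Fin k := ⟨0, Nat.pos_of_ne_zero hk⟩
    exact ⟨y i, hmem i, by simpa using hz i 0 (hpos i)⟩
  | succ p ih =>
    intro f hf h
    have hd : ContDiff ℝ (⊤ : ℕ∞) (deriv f) := (contDiff_infty_iff_deriv.mp hf).2
    obtain ⟨ξ, hξ, hz⟩ := ih (deriv f) hd (rolle_step hf.continuous h)
    exact ⟨ξ, hξ, by rw [iteratedDeriv_succ']; exact hz⟩

theorem stmt5 (n m : ℕ) (hm : 0 < m) (a b : ℕ → ℝ) (P : ℝ → ℝ)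
    (hP : ∀ x, P x = ∑ k ∈ Finset.range (n + 1),
      (a k * Real.cos (k * x) + b k * Real.sin (k * x)))
    (u v r : ℝ) (huv : u ≤ v) (hr : r = v - u)
    (hz : HasZerosWithMult P (Set.Icc u v) m) :
    ∀ θ ∈ Set.Icc u v,
      |P θ| ≤ (4 * Real.exp 1 * r / m) ^ m *
        sSup ((fun x => |iteratedDeriv m P x|) '' Set.Icc u v) := by
  intro θ hθ
  classical
  have hPf : ContDiff ℝ (⊤ : ℕ∞) P := by
    have hPeq : P = fun x => ∑ k ∈ Finset.range (n + 1),
        (a k * Real.cos (k * x) + b k * Real.sin (k * x)) := funext hP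
    rw [hPeq]
    apply ContDiff.sum
    intro k _
    exact (contDiff_const.mul (Real.contDiff_cos.comp (contDiff_const.mul contDiff_id))).add
      (contDiff_const.mul (Real.contDiff_sin.comp (contDiff_const.mul contDiff_id)))
  have hr0 : 0 ≤ r := by rw [hr]; linarith
  have hm0 : (0:ℝ) < m := by exact_mod_cast hm
  set M := sSup ((fun x => |iteratedDeriv m P x|) '' Set.Icc u v) with hM
  have hcont : Continuous fun x => |iteratedDeriv m P x| :=
    (hPf.continuous_iteratedDeriv m (by exact_mod_cast le_top)).abs
  have hbdd : BddAbove ((fun x => |iteratedDeriv m P x|) '' Set.Icc u v) :=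
    (isCompact_Icc.image_of_continuousOn hcont.continuousOn).bddAbove
  have hMle : ∀ x ∈ Set.Icc u v, |iteratedDeriv m P x| ≤ M := fun x hx =>
    le_csSup hbdd ⟨x, hx, rfl⟩
  have hM0 : 0 ≤ M := le_trans (abs_nonneg _) (hMle u ⟨le_refl u, huv⟩)
  have hC0 : 0 ≤ (4 * Real.exp 1 * r / m) ^ m := by positivity
  obtain ⟨k, y, mult, hy, hmem, hpos, hsum, hzz⟩ := hz
  by_cases hθy : ∃ i, θ = y i
  · obtain ⟨i, rfl⟩ := hθy
    have h0 : P (y i) = 0 := by simpa using hzz i 0 (hpos i)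
    rw [h0, abs_zero]
    exact mul_nonneg hC0 hM0
  push_neg at hθy
  set W : Polynomial ℝ := ∏ i : Fin k, (Polynomial.X - Polynomial.C (y i)) ^ (mult i) with hW
  have hWmonic : W.Monic :=
    Polynomial.monic_prod_of_monic _ _ fun i _ => (Polynomial.monic_X_sub_C _).pow _
  have hWdeg : W.natDegree = m := by
    rw [hW, Polynomial.natDegree_prod_of_monic _ _ fun i _ => (Polynomial.monic_X_sub_C _).pow _]
    simp_rw [Polynomial.natDegree_pow, Polynomial.natDegree_X_sub_C, mul_one]
    exact hsum
  have hWeval : ∀ x : ℝ, W.eval x = ∏ i : Fin k, (x - y i) ^ (mult i) := by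
    intro x; rw [hW]; simp [Polynomial.eval_prod]
  have hWθ : W.eval θ ≠ 0 := by
    rw [hWeval]
    exact Finset.prod_ne_zero_iff.mpr fun i _ => pow_ne_zero _ (sub_ne_zero.mpr (hθy i))
  set c := P θ / W.eval θ with hc
  set φ : ℝ → ℝ := fun t => P t - c * W.eval t with hφ
  have hφC : ContDiff ℝ (⊤ : ℕ∞) φ := hPf.sub (contDiff_const.mul (polyContDiff W))
  have hφd : ∀ (j : ℕ) (x : ℝ), iteratedDeriv j φ x
      = iteratedDeriv j P x - c * (Polynomial.derivative^[j] W).eval x := by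
    intro j x
    have hf1 : ContDiffOn ℝ j P Set.univ := (hPf.of_le (by exact_mod_cast le_top)).contDiffOn
    have hf2 : ContDiffOn ℝ j (fun t => c * W.eval t) Set.univ :=
      ((contDiff_const.mul (polyContDiff W)).of_le (by exact_mod_cast le_top)).contDiffOn
    have hf3 : ContDiffOn ℝ j (fun t => W.eval t) Set.univ :=
      ((polyContDiff W).of_le (by exact_mod_cast le_top)).contDiffOn
    have h1 := iteratedDerivWithin_sub (Set.mem_univ x) uniqueDiffOn_univ (hf1 x (Set.mem_univ x)) (hf2 x (Set.mem_univ x))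
    rw [iteratedDerivWithin_univ, iteratedDerivWithin_univ, iteratedDerivWithin_univ] at h1
    have h2 := iteratedDerivWithin_const_mul (Set.mem_univ x) uniqueDiffOn_univ c (hf3 x (Set.mem_univ x))
    rw [iteratedDerivWithin_univ, iteratedDerivWithin_univ] at h2
    have h1' : iteratedDeriv j φ x
        = iteratedDeriv j P x - iteratedDeriv j (fun t => c * W.eval t) x := h1
    rw [h1', h2, iteratedDeriv_polyeval j W]
  have hzφ : HasZerosWithMult φ (Set.Icc u v) (m + 1) := by
    refine ⟨k + 1, Fin.cons θ y, Fin.cons 1 mult, ?_, ?_, ?_, ?_, ?_⟩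
    · intro i j hij
      induction i using Fin.cases with
      | zero =>
        induction j using Fin.cases with
        | zero => rfl
        | succ j =>
          rw [Fin.cons_zero, Fin.cons_succ] at hij
          exact absurd hij (hθy j)
      | succ i =>
        induction j using Fin.cases with
        | zero =>
          rw [Fin.cons_zero, Fin.cons_succ] at hij
          exact absurd hij.symm (hθy i)
        | succ j =>
          rw [Fin.cons_succ, Fin.cons_succ] at hij
          exact congrArg Fin.succ (hy hij)
    · intro i
      induction i using Fin.cases with
      | zero => exact hθ
      | succ i => exact hmem i
    · intro i
      induction i using Fin.cases with
      | zero => simp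
      | succ i => simpa using hpos i
    · rw [Fin.sum_cons, hsum, add_comm]
    · intro i j hj
      induction i using Fin.cases with
      | zero =>
        rw [Fin.cons_zero] at hj ⊢
        interval_cases j
        rw [iteratedDeriv_zero, hφ]
        simp only
        rw [hc, div_mul_cancel₀ _ hWθ, sub_self]
      | succ i =>
        rw [Fin.cons_succ] at hj ⊢
        rw [hφd j (y i), hzz i j hj, eval_iterate_deriv_zero W
          (Finset.dvd_prod_of_mem _ (Finset.mem_univ i)) hj]
        ring
  obtain ⟨ξ, hξ, hξ0⟩ := exists_iter_zero m φ hφC hzφ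
  have hfact : (0:ℝ) < (m.factorial : ℝ) := by exact_mod_cast m.factorial_pos
  have hiter : iteratedDeriv m P ξ = c * m.factorial := by
    have h3 := hφd m ξ
    rw [hξ0] at h3
    have hc1 : W.coeff m = 1 := by rw [← hWdeg]; exact hWmonic.coeff_natDegree
    rw [iter_deriv_eq_C m W hWdeg.le, hc1] at h3
    simp only [Polynomial.eval_C, mul_one] at h3
    linarith
  have hcle : |c| ≤ M / m.factorial := by
    rw [le_div_iff₀ hfact]
    calc |c| * (m.factorial : ℝ) = |iteratedDeriv m P ξ| := by
          rw [hiter, abs_mul, abs_of_pos hfact]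
      _ ≤ M := hMle ξ hξ
  have hWb : |W.eval θ| ≤ r ^ m := by
    rw [hWeval, Finset.abs_prod]
    calc (∏ i, |(θ - y i) ^ mult i|) ≤ ∏ i : Fin k, r ^ mult i := by
          apply Finset.prod_le_prod (fun i _ => abs_nonneg _)
          intro i _
          rw [abs_pow]
          apply pow_le_pow_left₀ (abs_nonneg _)
          have h1 := (hmem i).1
          have h2 := (hmem i).2
          rw [abs_sub_le_iff]
          constructor <;> [skip; skip] <;> rw [hr] <;>
            first
              | (have := hθ.1; have := hθ.2; linarith)
      _ = r ^ m := by rw [Finset.prod_pow_eq_pow_sum, hsum]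
  have key : (m:ℝ)^m ≤ (m.factorial : ℝ) * Real.exp 1 ^ m := by
    have h1 : ((m:ℝ))^m / m.factorial ≤ Real.exp m :=
      le_trans (Finset.single_le_sum (f := fun i => (m:ℝ)^i / i.factorial)
        (fun i _ => by positivity) (Finset.self_mem_range_succ m))
        (Real.sum_le_exp_of_nonneg (Nat.cast_nonneg m) (m+1))
    have h2 : Real.exp (m:ℝ) = Real.exp 1 ^ m := by
      rw [← Real.exp_nat_mul]; simp
    rw [h2, div_le_iff₀ hfact] at h1
    linarith
  have hfinal : r ^ m / m.factorial ≤ (4 * Real.exp 1 * r / m) ^ m := by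
    rw [div_pow, div_le_div_iff₀ hfact (by positivity : (0:ℝ) < (m:ℝ)^m)]
    have e1 : (0:ℝ) < Real.exp 1 := Real.exp_pos 1
    have h4 : (1:ℝ) ≤ 4 ^ m := one_le_pow₀ (by norm_num : (1:ℝ) ≤ 4)
    calc r ^ m * (m:ℝ)^m ≤ r ^ m * ((m.factorial : ℝ) * Real.exp 1 ^ m) :=
          mul_le_mul_of_nonneg_left key (pow_nonneg hr0 m)
      _ = (Real.exp 1 ^ m * r ^ m) * m.factorial := by ring
      _ ≤ (4 ^ m * (Real.exp 1 ^ m * r ^ m)) * m.factorial := by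
          have hnn : 0 ≤ Real.exp 1 ^ m * r ^ m := by positivity
          exact mul_le_mul_of_nonneg_right (le_mul_of_one_le_left hnn h4) hfact.le
      _ = (4 * Real.exp 1 * r) ^ m * m.factorial := by rw [mul_pow, mul_pow]; ring
  have hPθ : P θ = c * W.eval θ := (div_mul_cancel₀ _ hWθ).symm
  calc |P θ| = |c| * |W.eval θ| := by rw [hPθ, abs_mul]
    _ ≤ (M / m.factorial) * r ^ m :=
        mul_le_mul hcle hWb (abs_nonneg _) (div_nonneg hM0 hfact.le)
    _ = (r ^ m / m.factorial) * M := by ring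
    _ ≤ (4 * Real.exp 1 * r / m) ^ m * M := mul_le_mul_of_nonneg_right hfinal hM0
end

section
/- Let 0 < τ ≤ 1/64. There exist constants c > 0 and C₀'₀ (depending on τ) such that for every C₀' ≥ C₀'₀ the following holds for all sufficiently large n. Let t ∈ [−π,π] satisfy Condition(τ,C₀'), and let I = {a, a+1, …, a+L} ⊆ {1,…,n} be a set of consecutive integers with L ≥ n^{1−4τ}. Then for every unit vector e ∈ ℝ², ∑_{i∈I} ⟨e, v_i⟩² ≥ c L³/n² and ∑_{i∈I} ⟨e, v_i'⟩² ≥ c L³/n². -/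
open Real

/-- `t` satisfies Condition(τ, C₀'): there is no nonzero integer `k` with `|k| ≤ C₀'` such that
`‖kt/π‖_{ℝ/ℤ} ≤ n^{-1+8τ}`. -/
def Condition (n : ℕ) (τ C₀' t : ℝ) : Prop :=
  ∀ k : ℤ, k ≠ 0 → |(k : ℝ)| ≤ C₀' →
    ∀ m : ℤ, (n : ℝ) ^ (-1 + 8 * τ) < |(k : ℝ) * t / Real.pi - (m : ℝ)|

/-- `⟨v_i, x⟩` where `v_i = (cos(it), -(i/n) sin(it))`. -/
noncomputable def ipv (n : ℕ) (t : ℝ) (i : ℕ) (x : ℝ × ℝ) : ℝ :=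
  Real.cos (i * t) * x.1 + (-((i : ℝ) / n) * Real.sin (i * t)) * x.2

/-- `⟨v_i', x⟩` where `v_i' = (sin(it), (i/n) cos(it))`. -/
noncomputable def ipv' (n : ℕ) (t : ℝ) (i : ℕ) (x : ℝ × ℝ) : ℝ :=
  Real.sin (i * t) * x.1 + ((i : ℝ) / n) * Real.cos (i * t) * x.2


lemma exp_abs_sub_one (θ : ℝ) :
    ‖Complex.exp (↑θ * Complex.I) - 1‖ = 2 * |Real.sin (θ/2)| := by
  have key : Complex.exp (↑θ * Complex.I) - 1
      = Complex.exp (↑(θ/2) * Complex.I) * (2 * Complex.I * Complex.sin (↑(θ/2))) := by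
    have h1 : Complex.exp (↑θ * Complex.I)
        = Complex.exp (↑(θ/2) * Complex.I) * Complex.exp (↑(θ/2) * Complex.I) := by
      rw [← Complex.exp_add]; congr 1; push_cast; ring
    have h2 : Complex.exp (↑(θ/2) * Complex.I) * Complex.exp (-(↑(θ/2) * Complex.I)) = 1 := by
      rw [← Complex.exp_add]; simp
    rw [Complex.sin, h1]
    rw [show (-(↑(θ/2):ℂ) * Complex.I) = -((↑(θ/2):ℂ) * Complex.I) by ring]
    linear_combination (Complex.exp (↑(θ/2) * Complex.I)^2
      - Complex.exp (↑(θ/2) * Complex.I) * Complex.exp (-(↑(θ/2) * Complex.I))) * Complex.I_sq + h2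
  rw [key, norm_mul, norm_mul, norm_mul, Complex.norm_exp_ofReal_mul_I, Complex.norm_I,
    Complex.norm_two, ← Complex.ofReal_sin, Complex.norm_real, Real.norm_eq_abs]
  ring

lemma exp_sum_bound (θ : ℝ) (hs : Real.sin (θ/2) ≠ 0) (a b : ℕ) :
    ‖∑ i ∈ Finset.Icc a b, Complex.exp (↑((i:ℝ) * θ) * Complex.I)‖
      ≤ 1 / |Real.sin (θ/2)| := by
  have habs := exp_abs_sub_one θ
  have hpos : 0 < |Real.sin (θ/2)| := abs_pos.mpr hs
  have hz1 : Complex.exp (↑θ * Complex.I) ≠ 1 := by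
    intro h
    rw [h, sub_self, norm_zero] at habs
    exact hs (abs_eq_zero.mp (by linarith))
  rcases le_or_gt a b with hab | hab
  · have he : ∀ i : ℕ, Complex.exp (↑((i:ℝ) * θ) * Complex.I) = (Complex.exp (↑θ * Complex.I)) ^ i := by
      intro i
      rw [← Complex.exp_nat_mul]
      congr 1; push_cast; ring
    rw [Finset.sum_congr rfl (fun i _ => he i)]
    rw [← Finset.Ico_add_one_right_eq_Icc, geom_sum_Ico hz1 (by omega)]
    rw [norm_div, habs]
    have hnum : ‖(Complex.exp (↑θ * Complex.I))^(b+1) - (Complex.exp (↑θ * Complex.I))^a‖ ≤ 2 := by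
      calc _ ≤ ‖(Complex.exp (↑θ * Complex.I))^(b+1)‖ + ‖(Complex.exp (↑θ * Complex.I))^a‖ :=
            norm_sub_le _ _
        _ ≤ 2 := by
            rw [norm_pow, norm_pow, Complex.norm_exp_ofReal_mul_I]
            norm_num
    rw [div_le_div_iff₀ (by positivity) hpos]
    nlinarith [mul_le_mul_of_nonneg_right hnum hpos.le]
  · rw [Finset.Icc_eq_empty (by omega)]
    simp


lemma cos_sum_bound (θ : ℝ) (hs : Real.sin (θ/2) ≠ 0) (a b : ℕ) :
    |∑ i ∈ Finset.Icc a b, Real.cos ((i:ℝ) * θ)| ≤ 1 / |Real.sin (θ/2)| := by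
  have h : ∑ i ∈ Finset.Icc a b, Real.cos ((i:ℝ) * θ)
      = (∑ i ∈ Finset.Icc a b, Complex.exp (↑((i:ℝ) * θ) * Complex.I)).re := by
    rw [Complex.re_sum]
    exact Finset.sum_congr rfl fun i _ => (Complex.exp_ofReal_mul_I_re _).symm
  rw [h]
  exact (Complex.abs_re_le_norm _).trans (exp_sum_bound θ hs a b)

lemma sin_sum_bound (θ : ℝ) (hs : Real.sin (θ/2) ≠ 0) (a b : ℕ) :
    |∑ i ∈ Finset.Icc a b, Real.sin ((i:ℝ) * θ)| ≤ 1 / |Real.sin (θ/2)| := by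
  have h : ∑ i ∈ Finset.Icc a b, Real.sin ((i:ℝ) * θ)
      = (∑ i ∈ Finset.Icc a b, Complex.exp (↑((i:ℝ) * θ) * Complex.I)).im := by
    rw [Complex.im_sum]
    exact Finset.sum_congr rfl fun i _ => (Complex.exp_ofReal_mul_I_im _).symm
  rw [h]
  exact (Complex.abs_im_le_norm _).trans (exp_sum_bound θ hs a b)

lemma abel_bound (c w : ℕ → ℝ) (M : ℝ) (a : ℕ) (hw0 : 0 ≤ w a)
    (hmono : Monotone w)
    (hS : ∀ b, |∑ i ∈ Finset.Icc a b, c i| ≤ M) (b : ℕ) (hab : a ≤ b) :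
    |∑ i ∈ Finset.Icc a b, w i * c i| ≤ 2 * w b * M := by
  have hM : 0 ≤ M := le_trans (abs_nonneg _) (hS a)
  have key : ∀ b, a ≤ b →
      |∑ i ∈ Finset.Icc a b, w i * c i - w b * ∑ i ∈ Finset.Icc a b, c i|
        ≤ (w b - w a) * M := by
    intro b hb
    induction b, hb using Nat.le_induction with
    | base => simp [Finset.Icc_self]
    | succ b hb ih =>
      rw [Finset.sum_Icc_succ_top (by omega), Finset.sum_Icc_succ_top (by omega)]
      have expand : (∑ i ∈ Finset.Icc a b, w i * c i + w (b+1) * c (b+1))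
          - w (b+1) * (∑ i ∈ Finset.Icc a b, c i + c (b+1))
        = (∑ i ∈ Finset.Icc a b, w i * c i - w b * ∑ i ∈ Finset.Icc a b, c i)
          + (w b - w (b+1)) * ∑ i ∈ Finset.Icc a b, c i := by ring
      rw [expand]
      have h3 : |(w b - w (b+1)) * ∑ i ∈ Finset.Icc a b, c i| ≤ (w (b+1) - w b) * M := by
        rw [abs_mul, abs_of_nonpos (by linarith [hmono (Nat.le_succ b)])]
        have := hS b
        nlinarith [abs_nonneg (∑ i ∈ Finset.Icc a b, c i), hmono (Nat.le_succ b)]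
      calc _ ≤ |∑ i ∈ Finset.Icc a b, w i * c i - w b * ∑ i ∈ Finset.Icc a b, c i|
            + |(w b - w (b+1)) * ∑ i ∈ Finset.Icc a b, c i| := abs_add_le _ _
        _ ≤ (w b - w a) * M + (w (b+1) - w b) * M := add_le_add ih h3
        _ = (w (b+1) - w a) * M := by ring
  have h1 := key b hab
  have h2 := hS b
  have hwb : 0 ≤ w b := le_trans hw0 (hmono hab)
  calc |∑ i ∈ Finset.Icc a b, w i * c i|
      ≤ |∑ i ∈ Finset.Icc a b, w i * c i - w b * ∑ i ∈ Finset.Icc a b, c i|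
        + |w b * ∑ i ∈ Finset.Icc a b, c i| := by
        have := abs_add_le (∑ i ∈ Finset.Icc a b, w i * c i - w b * ∑ i ∈ Finset.Icc a b, c i)
          (w b * ∑ i ∈ Finset.Icc a b, c i)
        simpa using this
    _ ≤ (w b - w a) * M + w b * M := by
        refine add_le_add h1 ?_
        rw [abs_mul, abs_of_nonneg hwb]
        exact mul_le_mul_of_nonneg_left h2 hwb
    _ ≤ 2 * w b * M := by nlinarith

lemma quad_bound (A B C D e₁ e₂ : ℝ) (hAD : 0 < A - D) (hCD : 0 ≤ C - D)
    (hB : B^2 ≤ 4*(A-D)*(C-D)) (he : e₁^2 + e₂^2 = 1) :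
    D ≤ A * e₁^2 + B * (e₁*e₂) + C * e₂^2 := by
  have hq : 0 ≤ (A-D) * e₁^2 + B * (e₁*e₂) + (C-D) * e₂^2 := by
    nlinarith [sq_nonneg (2*(A-D)*e₁ + B*e₂),
      mul_nonneg (by linarith : (0:ℝ) ≤ 4*(A-D)*(C-D) - B^2) (sq_nonneg e₂)]
  have hexp : A * e₁^2 + B * (e₁*e₂) + C * e₂^2
      = ((A-D) * e₁^2 + B * (e₁*e₂) + (C-D) * e₂^2) + D * (e₁^2 + e₂^2) := by ring
  rw [hexp, he]
  linarith

lemma sq_sum_lower (a L n : ℕ) (hn : 0 < n) (hL : 0 < L) :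
    (L:ℝ) * (((a:ℝ)+L)/n)^2 / 3 ≤ ∑ i ∈ Finset.Icc a (a+L), ((i:ℝ)/n)^2 := by
  have hn0 : (0:ℝ) < n := by exact_mod_cast hn
  have hL0 : (0:ℝ) < L := by exact_mod_cast hL
  have ha0 : (0:ℝ) ≤ a := Nat.cast_nonneg a
  have hre : ∑ i ∈ Finset.Icc a (a+L), ((i:ℝ)/n)^2
      = ∑ j ∈ Finset.range (L+1), (((a:ℝ)+j)/n)^2 := by
    rw [← Finset.Ico_add_one_right_eq_Icc, Finset.sum_Ico_eq_sum_range]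
    have h' : a + L + 1 - a = L + 1 := by omega
    rw [h']
    exact Finset.sum_congr rfl fun j _ => by push_cast; ring_nf
  rw [hre]
  have hsum : (L:ℝ)^3/3 ≤ ∑ j ∈ Finset.range (L+1), (j:ℝ)^2 := by
    clear hre hL0 hL
    induction L with
    | zero => simp
    | succ m ih =>
      rw [Finset.sum_range_succ]
      push_cast
      push_cast at ih
      nlinarith [ih, Nat.cast_nonneg (α := ℝ) m]
  have hterm : ∀ j ∈ Finset.range (L+1),
      ((a:ℝ)+L)^2/((n:ℝ)^2*(L:ℝ)^2) * (j:ℝ)^2 ≤ (((a:ℝ)+j)/n)^2 := by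
    intro j hj
    simp only [Finset.mem_range] at hj
    have hjL : (j:ℝ) ≤ L := by exact_mod_cast Nat.lt_succ_iff.mp hj
    have hj0 : (0:ℝ) ≤ j := Nat.cast_nonneg j
    have hnum : ((a:ℝ)+L)^2*(j:ℝ)^2 ≤ (((a:ℝ)+j))^2*(L:ℝ)^2 := by
      have cross : (j:ℝ) * ((a:ℝ)+L) ≤ ((a:ℝ)+j) * L := by nlinarith
      nlinarith [mul_nonneg hj0 (by linarith : (0:ℝ) ≤ (a:ℝ)+L), cross,
        mul_nonneg (mul_nonneg hj0 (by linarith : (0:ℝ) ≤ (a:ℝ)+L)) (by linarith : (0:ℝ) ≤ ((a:ℝ)+j)*L - (j:ℝ)*((a:ℝ)+L))]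
    rw [div_pow, div_mul_eq_mul_div, div_le_div_iff₀ (by positivity) (by positivity)]
    nlinarith [hnum, sq_nonneg ((a:ℝ)+j), hn0, hL0, mul_pos hn0 hn0, mul_pos hL0 hL0]
  calc (L:ℝ) * (((a:ℝ)+L)/n)^2 / 3
      = ((a:ℝ)+L)^2/((n:ℝ)^2*(L:ℝ)^2) * ((L:ℝ)^3/3) := by
        field_simp
    _ ≤ ((a:ℝ)+L)^2/((n:ℝ)^2*(L:ℝ)^2) * ∑ j ∈ Finset.range (L+1), (j:ℝ)^2 :=
        mul_le_mul_of_nonneg_left hsum (by positivity)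
    _ = ∑ j ∈ Finset.range (L+1), ((a:ℝ)+L)^2/((n:ℝ)^2*(L:ℝ)^2) * (j:ℝ)^2 := Finset.mul_sum _ _ _
    _ ≤ _ := Finset.sum_le_sum hterm

lemma jordan_aux (x : ℝ) (hx : |x| ≤ 1/2) (m : ℤ) :
    2 * |x| ≤ |Real.sin (π * x + m * π)| := by
  have hsin_eq : |Real.sin (π * x + m * π)| = |Real.sin (π * x)| := by
    rw [Real.sin_add_int_mul_pi, abs_mul]
    have h1 : |((-1:ℝ)) ^ m| = 1 := by
      rcases Int.even_or_odd m with hm | hm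
      · rw [hm.neg_one_zpow]; norm_num
      · rw [hm.neg_one_zpow]; norm_num
    rw [h1, one_mul]
  have hax : |π * x| ≤ π/2 := by
    rw [abs_mul, abs_of_nonneg Real.pi_pos.le]
    nlinarith [Real.pi_pos]
  have hsabs : |Real.sin (π * x)| = Real.sin (|π * x|) := by
    rcases le_or_gt 0 (π * x) with h | h
    · rw [abs_of_nonneg h] at hax
      rw [abs_of_nonneg h, abs_of_nonneg]
      exact Real.sin_nonneg_of_nonneg_of_le_pi h (by linarith [Real.pi_pos])
    · rw [abs_of_neg h] at hax
      rw [abs_of_neg h, Real.sin_neg]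
      exact abs_of_nonpos (Real.sin_nonpos_of_nonpos_of_neg_pi_le (by linarith)
        (by linarith [Real.pi_pos]))
  have hjord : 2 * |x| ≤ Real.sin (|π * x|) := by
    have h0 : 0 ≤ |π * x| := abs_nonneg _
    have hms := Real.mul_le_sin h0 hax
    rw [abs_mul, abs_of_nonneg Real.pi_pos.le] at hms ⊢
    have heq2 : 2/π * (π * |x|) = 2 * |x| := by
      field_simp
    linarith
  rw [hsin_eq, hsabs]
  exact hjord

lemma ipv_expand (n : ℕ) (t : ℝ) (i : ℕ) (e : ℝ × ℝ) :
    ipv n t i e ^ 2 = (1/2 + Real.cos ((i:ℝ)*(2*t))/2) * e.1^2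
      + (-(((i:ℝ)/n) * Real.sin ((i:ℝ)*(2*t)))) * (e.1*e.2)
      + (((i:ℝ)/n)^2/2 - ((i:ℝ)/n)^2 * Real.cos ((i:ℝ)*(2*t))/2) * e.2^2 := by
  have h2 : (i:ℝ)*(2*t) = 2*((i:ℝ)*t) := by ring
  rw [ipv, h2, Real.cos_two_mul, Real.sin_two_mul]
  linear_combination ((i:ℝ)/n)^2 * e.2^2 * (Real.sin_sq_add_cos_sq ((i:ℝ)*t))

lemma ipv'_expand (n : ℕ) (t : ℝ) (i : ℕ) (e : ℝ × ℝ) :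
    ipv' n t i e ^ 2 = (1/2 - Real.cos ((i:ℝ)*(2*t))/2) * e.1^2
      + (((i:ℝ)/n) * Real.sin ((i:ℝ)*(2*t))) * (e.1*e.2)
      + (((i:ℝ)/n)^2/2 + ((i:ℝ)/n)^2 * Real.cos ((i:ℝ)*(2*t))/2) * e.2^2 := by
  have h2 : (i:ℝ)*(2*t) = 2*((i:ℝ)*t) := by ring
  rw [ipv', h2, Real.cos_two_mul, Real.sin_two_mul]
  linear_combination e.1^2 * (Real.sin_sq_add_cos_sq ((i:ℝ)*t))

lemma assemble (Lr P M A B C e₁ e₂ : ℝ)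
    (hL1 : 1 ≤ Lr) (hP0 : 0 < P) (hP1 : P ≤ 1) (hM0 : 0 < M) (hML : 24*M ≤ Lr)
    (hA : (Lr+1)/2 - M/2 ≤ A) (hB : |B| ≤ 2*P*M) (hC : Lr*P^2/6 - P^2*M ≤ C)
    (he : e₁^2 + e₂^2 = 1) :
    Lr*P^2/24 ≤ A*e₁^2 + B*(e₁*e₂) + C*e₂^2 := by
  have hP2 : P^2 ≤ 1 := by nlinarith
  have hP2' : 0 < P^2 := by positivity
  have hAD : Lr/4 ≤ A - Lr*P^2/24 := by nlinarith
  have hCD : Lr*P^2/12 ≤ C - Lr*P^2/24 := by nlinarith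
  have hBB : B^2 ≤ 4*P^2*M^2 := by
    have h1 : |B|^2 ≤ (2*P*M)^2 := by
      apply pow_le_pow_left₀ (abs_nonneg B) hB
    rw [sq_abs] at h1
    nlinarith [h1]
  have hB4 : B^2 ≤ 4*(A - Lr*P^2/24)*(C - Lr*P^2/24) := by
    have hm : Lr/4 * (Lr*P^2/12) ≤ (A - Lr*P^2/24) * (C - Lr*P^2/24) :=
      mul_le_mul hAD hCD (by positivity) (le_trans (by linarith) hAD)
    have hMM : 576*M^2 ≤ Lr^2 := by nlinarith
    nlinarith [mul_nonneg (by nlinarith : (0:ℝ) ≤ Lr^2 - 576*M^2) hP2'.le]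
  exact quad_bound A B C _ e₁ e₂ (by linarith) (by nlinarith) hB4 he

set_option maxHeartbeats 1000000 in
theorem stmt14 (τ : ℝ) (hτ : 0 < τ) (hτ' : τ ≤ 1 / 64) :
    ∃ c > (0:ℝ), ∃ C₀'₀ : ℝ, ∀ C₀' ≥ C₀'₀, ∃ n₀ : ℕ, ∀ n : ℕ, n₀ ≤ n →
      ∀ t ∈ Set.Icc (-Real.pi) Real.pi, Condition n τ C₀' t →
      ∀ a L : ℕ, Finset.Icc a (a + L) ⊆ Finset.Icc 1 n → (n : ℝ) ^ (1 - 4 * τ) ≤ (L : ℝ) →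
      ∀ e : ℝ × ℝ, e.1 ^ 2 + e.2 ^ 2 = 1 →
        c * (L : ℝ) ^ 3 / (n : ℝ) ^ 2 ≤ ∑ i ∈ Finset.Icc a (a + L), (ipv n t i e) ^ 2 ∧
        c * (L : ℝ) ^ 3 / (n : ℝ) ^ 2 ≤ ∑ i ∈ Finset.Icc a (a + L), (ipv' n t i e) ^ 2 := by
  refine ⟨1/24, by norm_num, 2, fun C₀' hC₀' => ?_⟩
  refine ⟨max (⌈(24:ℝ)^(1/(4*τ))⌉₊) 1, fun n hn t ht hcond a L hsub hL e he => ?_⟩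
  have hn1 : 1 ≤ n := le_trans (le_max_right _ _) hn
  have hnR : (1:ℝ) ≤ (n:ℝ) := by exact_mod_cast hn1
  have hn0 : (0:ℝ) < (n:ℝ) := by linarith
  have h24 : (24:ℝ) ≤ (n:ℝ)^(4*τ) := by
    have h1 : ((24:ℝ)^(1/(4*τ)))^(4*τ) = 24 := by
      rw [← Real.rpow_mul (by norm_num : (0:ℝ) ≤ 24)]
      rw [show (1/(4*τ))*(4*τ) = 1 by field_simp]
      exact Real.rpow_one 24
    have h2 : (24:ℝ)^(1/(4*τ)) ≤ (n:ℝ) := by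
      calc (24:ℝ)^(1/(4*τ)) ≤ (⌈(24:ℝ)^(1/(4*τ))⌉₊ : ℝ) := Nat.le_ceil _
        _ ≤ (n:ℝ) := by exact_mod_cast le_trans (le_max_left _ _) hn
    calc (24:ℝ) = ((24:ℝ)^(1/(4*τ)))^(4*τ) := h1.symm
      _ ≤ (n:ℝ)^(4*τ) := Real.rpow_le_rpow (by positivity) h2 (by positivity)
  -- sin t lower bound from Condition
  have hsin : (n:ℝ)^(-1+8*τ) ≤ |Real.sin t| := by
    have h2 : (n:ℝ)^(-1+8*τ) < |(2:ℝ) * t / π - ((2*(round (t/π)) : ℤ):ℝ)| := by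
      have := hcond 2 (by norm_num) (by
        rw [show ((2:ℤ):ℝ) = (2:ℝ) by norm_num, abs_of_nonneg (by norm_num : (0:ℝ) ≤ 2)]
        exact hC₀') (2*(round (t/π)))
      exact_mod_cast this
    have heq : |(2:ℝ) * t / π - ((2*(round (t/π)) : ℤ):ℝ)|
        = 2 * |t/π - ((round (t/π) : ℤ):ℝ)| := by
      push_cast
      rw [show (2:ℝ)*t/π - (2*((round (t/π) : ℤ):ℝ)) = 2*(t/π - ((round (t/π) : ℤ):ℝ)) by ring,
        abs_mul]
      norm_num
    rw [heq] at h2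
    have hj := jordan_aux (t/π - ((round (t/π) : ℤ):ℝ)) (abs_sub_round (t/π)) (round (t/π))
    have hteq : π * (t/π - ((round (t/π) : ℤ):ℝ)) + ((round (t/π) : ℤ):ℝ) * π = t := by
      field_simp
      ring
    rw [hteq] at hj
    linarith
  have hsint_ne : Real.sin t ≠ 0 := by
    intro h
    rw [h, abs_zero] at hsin
    exact absurd hsin (not_le.mpr (Real.rpow_pos_of_pos hn0 _))
  set M : ℝ := (n:ℝ)^(1-8*τ) with hM
  have hM0 : 0 < M := Real.rpow_pos_of_pos hn0 _
  have hMsin : 1/|Real.sin t| ≤ M := by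
    rw [div_le_iff₀ (abs_pos.mpr hsint_ne)]
    have hmul : M * (n:ℝ)^(-1+8*τ) = 1 := by
      rw [hM, ← Real.rpow_add hn0]
      norm_num
    calc (1:ℝ) = M * (n:ℝ)^(-1+8*τ) := hmul.symm
      _ ≤ M * |Real.sin t| := mul_le_mul_of_nonneg_left hsin hM0.le
  have hML : 24 * M ≤ (L:ℝ) := by
    have hmul : M * (n:ℝ)^(4*τ) = (n:ℝ)^(1-4*τ) := by
      rw [hM, ← Real.rpow_add hn0]
      ring_nf
    calc 24 * M = M * 24 := by ring
      _ ≤ M * (n:ℝ)^(4*τ) := mul_le_mul_of_nonneg_left h24 hM0.le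
      _ = (n:ℝ)^(1-4*τ) := hmul
      _ ≤ (L:ℝ) := hL
  -- interval facts
  have hmem1 : a ∈ Finset.Icc a (a+L) := by simp
  have hmem2 : a + L ∈ Finset.Icc a (a+L) := by simp
  have ha1 : 1 ≤ a := (Finset.mem_Icc.mp (hsub hmem1)).1
  have haLn : a + L ≤ n := (Finset.mem_Icc.mp (hsub hmem2)).2
  have haLR : (a:ℝ) + (L:ℝ) ≤ (n:ℝ) := by exact_mod_cast haLn
  have haR : (1:ℝ) ≤ (a:ℝ) := by exact_mod_cast ha1
  have hL1 : (1:ℝ) ≤ (L:ℝ) := le_trans (Real.one_le_rpow hnR (by linarith)) hL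
  have hLpos : 0 < L := by exact_mod_cast lt_of_lt_of_le zero_lt_one (by exact_mod_cast hL1 : (1:ℕ) ≤ L)
  have hP0 : 0 < ((a:ℝ) + (L:ℝ))/(n:ℝ) := by positivity
  have hP1 : ((a:ℝ) + (L:ℝ))/(n:ℝ) ≤ 1 := by rw [div_le_one hn0]; linarith
  -- prefix sum bounds
  have hhalf : Real.sin (2*t/2) = Real.sin t := by norm_num
  have hs2 : Real.sin (2*t/2) ≠ 0 := by rw [hhalf]; exact hsint_ne
  have hSc : ∀ b, |∑ i ∈ Finset.Icc a b, Real.cos ((i:ℝ)*(2*t))| ≤ M := fun b =>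
    le_trans (cos_sum_bound (2*t) hs2 a b) (by rw [hhalf]; exact hMsin)
  have hSs : ∀ b, |∑ i ∈ Finset.Icc a b, Real.sin ((i:ℝ)*(2*t))| ≤ M := fun b =>
    le_trans (sin_sum_bound (2*t) hs2 a b) (by rw [hhalf]; exact hMsin)
  -- weights
  have hmono1 : Monotone (fun i : ℕ => (i:ℝ)/(n:ℝ)) := by
    intro i j hij
    dsimp only
    gcongr
  have hmono2 : Monotone (fun i : ℕ => ((i:ℝ)/(n:ℝ))^2) := by
    intro i j hij
    dsimp only
    have h1 : (i:ℝ)/(n:ℝ) ≤ (j:ℝ)/(n:ℝ) := hmono1 hij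
    have h2 : (0:ℝ) ≤ (i:ℝ)/(n:ℝ) := by positivity
    exact pow_le_pow_left₀ h2 h1 2
  -- Abel bounds
  have hBb : |∑ i ∈ Finset.Icc a (a+L), ((i:ℝ)/(n:ℝ)) * Real.sin ((i:ℝ)*(2*t))|
      ≤ 2*(((a:ℝ) + (L:ℝ))/(n:ℝ))*M := by
    have h := abel_bound (fun i => Real.sin ((i:ℝ)*(2*t))) (fun i : ℕ => (i:ℝ)/(n:ℝ)) M a
      (by positivity) hmono1 hSs (a+L) (Nat.le_add_right a L)
    calc _ ≤ 2 * (((a+L:ℕ):ℝ)/(n:ℝ)) * M := h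
      _ = 2*(((a:ℝ) + (L:ℝ))/(n:ℝ))*M := by push_cast; ring
  have hCb : |∑ i ∈ Finset.Icc a (a+L), ((i:ℝ)/(n:ℝ))^2 * Real.cos ((i:ℝ)*(2*t))|
      ≤ 2*(((a:ℝ) + (L:ℝ))/(n:ℝ))^2*M := by
    have h := abel_bound (fun i => Real.cos ((i:ℝ)*(2*t))) (fun i : ℕ => ((i:ℝ)/(n:ℝ))^2) M a
      (by positivity) hmono2 hSc (a+L) (Nat.le_add_right a L)
    calc _ ≤ 2 * (((a+L:ℕ):ℝ)/(n:ℝ))^2 * M := h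
      _ = 2*(((a:ℝ) + (L:ℝ))/(n:ℝ))^2*M := by push_cast; ring
  have hW2 : (L:ℝ)*(((a:ℝ) + (L:ℝ))/(n:ℝ))^2/3 ≤ ∑ i ∈ Finset.Icc a (a+L), ((i:ℝ)/(n:ℝ))^2 :=
    sq_sum_lower a L n (by omega) hLpos
  -- coefficient sums
  have e1 : ∑ i ∈ Finset.Icc a (a+L), ((1:ℝ)/2 + Real.cos ((i:ℝ)*(2*t))/2)
      = ((L:ℝ)+1)/2 + (∑ i ∈ Finset.Icc a (a+L), Real.cos ((i:ℝ)*(2*t)))/2 := by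
    rw [Finset.sum_add_distrib, Finset.sum_const, Nat.card_Icc,
      show a+L+1-a = L+1 from by omega, ← Finset.sum_div]
    simp [nsmul_eq_mul]
    push_cast
    ring
  have e1' : ∑ i ∈ Finset.Icc a (a+L), ((1:ℝ)/2 - Real.cos ((i:ℝ)*(2*t))/2)
      = ((L:ℝ)+1)/2 - (∑ i ∈ Finset.Icc a (a+L), Real.cos ((i:ℝ)*(2*t)))/2 := by
    rw [Finset.sum_sub_distrib, Finset.sum_const, Nat.card_Icc,
      show a+L+1-a = L+1 from by omega, ← Finset.sum_div]
    simp [nsmul_eq_mul]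
    push_cast
    ring
  have e3 : ∑ i ∈ Finset.Icc a (a+L), (((i:ℝ)/(n:ℝ))^2/2 - ((i:ℝ)/(n:ℝ))^2 * Real.cos ((i:ℝ)*(2*t))/2)
      = (∑ i ∈ Finset.Icc a (a+L), ((i:ℝ)/(n:ℝ))^2)/2
        - (∑ i ∈ Finset.Icc a (a+L), ((i:ℝ)/(n:ℝ))^2 * Real.cos ((i:ℝ)*(2*t)))/2 := by
    rw [Finset.sum_sub_distrib, ← Finset.sum_div, ← Finset.sum_div]
  have e3' : ∑ i ∈ Finset.Icc a (a+L), (((i:ℝ)/(n:ℝ))^2/2 + ((i:ℝ)/(n:ℝ))^2 * Real.cos ((i:ℝ)*(2*t))/2)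
      = (∑ i ∈ Finset.Icc a (a+L), ((i:ℝ)/(n:ℝ))^2)/2
        + (∑ i ∈ Finset.Icc a (a+L), ((i:ℝ)/(n:ℝ))^2 * Real.cos ((i:ℝ)*(2*t)))/2 := by
    rw [Finset.sum_add_distrib, ← Finset.sum_div, ← Finset.sum_div]
  have e2 : ∑ i ∈ Finset.Icc a (a+L), (-(((i:ℝ)/(n:ℝ)) * Real.sin ((i:ℝ)*(2*t))))
      = -∑ i ∈ Finset.Icc a (a+L), ((i:ℝ)/(n:ℝ)) * Real.sin ((i:ℝ)*(2*t)) :=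
    Finset.sum_neg_distrib _
  -- final lower bound on L*P^2/24
  have hfin : (1:ℝ)/24 * (L:ℝ)^3/(n:ℝ)^2 ≤ (L:ℝ)*(((a:ℝ) + (L:ℝ))/(n:ℝ))^2/24 := by
    have hPL : (L:ℝ)/(n:ℝ) ≤ ((a:ℝ) + (L:ℝ))/(n:ℝ) := by
      gcongr
      linarith
    have hsq : ((L:ℝ)/(n:ℝ))^2 ≤ (((a:ℝ) + (L:ℝ))/(n:ℝ))^2 :=
      pow_le_pow_left₀ (by positivity) hPL 2
    have heq3 : (1:ℝ)/24 * (L:ℝ)^3/(n:ℝ)^2 = (L:ℝ)*((L:ℝ)/(n:ℝ))^2/24 := by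
      field_simp
    rw [heq3]
    have := mul_le_mul_of_nonneg_left hsq (by positivity : (0:ℝ) ≤ (L:ℝ))
    linarith
  have habsSc := abs_le.mp (hSc (a+L))
  have habsBs := abs_le.mp hBb
  have habsCc := abs_le.mp hCb
  constructor
  · -- ipv part
    have hsum1 : ∑ i ∈ Finset.Icc a (a+L), (ipv n t i e)^2
        = (((L:ℝ)+1)/2 + (∑ i ∈ Finset.Icc a (a+L), Real.cos ((i:ℝ)*(2*t)))/2) * e.1^2
          + (-∑ i ∈ Finset.Icc a (a+L), ((i:ℝ)/(n:ℝ)) * Real.sin ((i:ℝ)*(2*t))) * (e.1*e.2)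
          + ((∑ i ∈ Finset.Icc a (a+L), ((i:ℝ)/(n:ℝ))^2)/2
            - (∑ i ∈ Finset.Icc a (a+L), ((i:ℝ)/(n:ℝ))^2 * Real.cos ((i:ℝ)*(2*t)))/2) * e.2^2 := by
      rw [← e1, ← e2, ← e3, Finset.sum_mul, Finset.sum_mul, Finset.sum_mul,
        ← Finset.sum_add_distrib, ← Finset.sum_add_distrib]
      exact Finset.sum_congr rfl fun i _ => ipv_expand n t i e
    rw [hsum1]
    refine le_trans hfin (assemble (L:ℝ) (((a:ℝ) + (L:ℝ))/(n:ℝ)) M _ _ _ e.1 e.2 hL1 hP0 hP1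
      hM0 hML (by linarith [habsSc.1]) (by rw [abs_neg]; exact hBb) (by linarith [habsCc.1, hW2]) he)
  · -- ipv' part
    have hsum2 : ∑ i ∈ Finset.Icc a (a+L), (ipv' n t i e)^2
        = (((L:ℝ)+1)/2 - (∑ i ∈ Finset.Icc a (a+L), Real.cos ((i:ℝ)*(2*t)))/2) * e.1^2
          + (∑ i ∈ Finset.Icc a (a+L), ((i:ℝ)/(n:ℝ)) * Real.sin ((i:ℝ)*(2*t))) * (e.1*e.2)
          + ((∑ i ∈ Finset.Icc a (a+L), ((i:ℝ)/(n:ℝ))^2)/2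
            + (∑ i ∈ Finset.Icc a (a+L), ((i:ℝ)/(n:ℝ))^2 * Real.cos ((i:ℝ)*(2*t)))/2) * e.2^2 := by
      rw [← e1', ← e3', Finset.sum_mul, Finset.sum_mul, Finset.sum_mul,
        ← Finset.sum_add_distrib, ← Finset.sum_add_distrib]
      exact Finset.sum_congr rfl fun i _ => ipv'_expand n t i e
    rw [hsum2]
    refine le_trans hfin (assemble (L:ℝ) (((a:ℝ) + (L:ℝ))/(n:ℝ)) M _ _ _ e.1 e.2 hL1 hP0 hP1
      hM0 hML (by linarith [habsSc.2]) hBb (by linarith [habsCc.2, hW2]) he)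
end

section
/- Let 0 < τ ≤ 1/64. There exists a constant C₀'₀ (depending on τ) such that for every C₀' ≥ C₀'₀ the following holds for all sufficiently large n. Let t ∈ [−π,π] satisfy Condition(τ,C₀'), and let I = {a, a+1, …, a+L} ⊆ {1,…,n} be a set of consecutive integers with L ≥ n^{1−4τ}. Then for every choice of signs ε₁, ε₂ ∈ {−1, 1} and every positive integer A₀ ≤ √(C₀'), there exists i ∈ I such that ε₁ · sin(i A₀ t) > 0 and ε₂ · cos(i A₀ t) > 0. -/
open Real

lemma sweep_pos (x₀ c β : ℝ) (hβ : 0 < β) (hβ' : β ≤ 1/8) (M : ℕ) (hM : (2:ℝ) ≤ M*β) :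
    ∃ j : ℕ, j ≤ M ∧ ∃ p : ℤ, c + p < x₀ + j*β ∧ x₀ + j*β < c + p + 1/4 := by
  set p : ℤ := ⌈x₀ - c⌉ with hp
  have hp1 : x₀ - c ≤ (p:ℝ) := Int.le_ceil _
  have hp2 : (p:ℝ) < x₀ - c + 1 := Int.ceil_lt_add_one _
  have hnn : 0 ≤ (c + p - x₀)/β := div_nonneg (by linarith) hβ.le
  set j : ℕ := ⌊(c + p - x₀)/β⌋₊ + 1 with hj
  have h1 : (c + p - x₀)/β < (j:ℝ) := by
    have := Nat.lt_floor_add_one ((c + p - x₀)/β)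
    push_cast [hj]; push_cast at this; linarith
  have h2 : (j:ℝ) ≤ (c + p - x₀)/β + 1 := by
    have := Nat.floor_le hnn
    push_cast [hj]; linarith
  have hgt : c + (p:ℝ) < x₀ + j*β := by
    have := (div_lt_iff₀ hβ).mp h1
    linarith
  have hle : (j:ℝ)*β ≤ (c + p - x₀) + β := by
    have := mul_le_mul_of_nonneg_right h2 hβ.le
    rwa [add_mul, one_mul, div_mul_cancel₀ _ hβ.ne'] at this
  have hlt : x₀ + j*β < c + p + 1/4 := by linarith
  have hjM : j ≤ M := by
    have h3 : (j:ℝ)*β < (M:ℝ)*β := by linarith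
    have := lt_of_mul_lt_mul_right h3 hβ.le
    exact_mod_cast this.le
  exact ⟨j, hjM, p, hgt, hlt⟩

lemma sweep (x₀ c β : ℝ) (hβ0 : β ≠ 0) (hβ' : |β| ≤ 1/8) (M : ℕ) (hM : (2:ℝ) ≤ M*|β|) :
    ∃ j : ℕ, j ≤ M ∧ ∃ p : ℤ, c + p < x₀ + j*β ∧ x₀ + j*β < c + p + 1/4 := by
  rcases hβ0.lt_or_gt with h | h
  · have habs : |β| = -β := abs_of_neg h
    rw [habs] at hβ' hM
    obtain ⟨j, hjM, p, h1, h2⟩ := sweep_pos (-x₀) (-(c+1/4)) (-β) (by linarith) hβ' M hM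
    exact ⟨j, hjM, -p, by push_cast at h1 h2 ⊢; constructor <;> nlinarith⟩
  · have habs : |β| = β := abs_of_pos h
    rw [habs] at hβ' hM
    exact sweep_pos x₀ c β h hβ' M hM

lemma quadrant (ε₁ ε₂ : ℝ) (hε₁ : ε₁ = -1 ∨ ε₁ = 1) (hε₂ : ε₂ = -1 ∨ ε₂ = 1) :
    ∃ c : ℝ, ∀ y : ℝ, 2*π*c < y → y < 2*π*c + π/2 →
      0 < ε₁ * Real.sin y ∧ 0 < ε₂ * Real.cos y := by
  have hπ := Real.pi_pos
  rcases hε₁ with h1 | h1 <;> rcases hε₂ with h2 | h2 <;> subst h1 h2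
  · -- ε₁ = -1, ε₂ = -1 : c = 1/2, y ∈ (π, 3π/2)
    refine ⟨1/2, fun y hy1 hy2 => ?_⟩
    have hs : 0 < Real.sin (y - π) :=
      Real.sin_pos_of_pos_of_lt_pi (by linarith) (by linarith)
    rw [Real.sin_sub_pi] at hs
    have hc : Real.cos y < 0 :=
      Real.cos_neg_of_pi_div_two_lt_of_lt (by linarith) (by linarith)
    constructor <;> nlinarith
  · -- ε₁ = -1, ε₂ = 1 : c = 3/4, y ∈ (3π/2, 2π)
    refine ⟨3/4, fun y hy1 hy2 => ?_⟩
    have hs : 0 < Real.sin (y - π) :=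
      Real.sin_pos_of_pos_of_lt_pi (by linarith) (by linarith)
    rw [Real.sin_sub_pi] at hs
    have hc : 0 < Real.cos (y - 2*π) :=
      Real.cos_pos_of_mem_Ioo ⟨by linarith, by linarith⟩
    rw [Real.cos_sub_two_pi] at hc
    constructor <;> nlinarith
  · -- ε₁ = 1, ε₂ = -1 : c = 1/4, y ∈ (π/2, π)
    refine ⟨1/4, fun y hy1 hy2 => ?_⟩
    have hs : 0 < Real.sin y :=
      Real.sin_pos_of_pos_of_lt_pi (by linarith) (by linarith)
    have hc : Real.cos y < 0 :=
      Real.cos_neg_of_pi_div_two_lt_of_lt (by linarith) (by linarith)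
    constructor <;> nlinarith
  · -- ε₁ = 1, ε₂ = 1 : c = 0, y ∈ (0, π/2)
    refine ⟨0, fun y hy1 hy2 => ?_⟩
    have hs : 0 < Real.sin y :=
      Real.sin_pos_of_pos_of_lt_pi (by linarith) (by linarith)
    have hc : 0 < Real.cos y :=
      Real.cos_pos_of_mem_Ioo ⟨by linarith, by linarith⟩
    constructor <;> nlinarith

set_option maxHeartbeats 1000000 in
theorem stmt15 (τ : ℝ) (hτ : 0 < τ) (hτ' : τ ≤ 1 / 64) :
    ∃ C₀'₀ : ℝ, ∀ C₀' ≥ C₀'₀, ∃ n₀ : ℕ, ∀ n : ℕ, n₀ ≤ n →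
      ∀ t ∈ Set.Icc (-Real.pi) Real.pi, Condition n τ C₀' t →
      ∀ a L : ℕ, Finset.Icc a (a + L) ⊆ Finset.Icc 1 n → (n : ℝ) ^ (1 - 4 * τ) ≤ (L : ℝ) →
      ∀ ε₁ ε₂ : ℝ, (ε₁ = -1 ∨ ε₁ = 1) → (ε₂ = -1 ∨ ε₂ = 1) →
      ∀ A₀ : ℕ, 0 < A₀ → (A₀ : ℝ) ≤ Real.sqrt C₀' →
        ∃ i ∈ Finset.Icc a (a + L),
          0 < ε₁ * Real.sin ((i : ℝ) * A₀ * t) ∧ 0 < ε₂ * Real.cos ((i : ℝ) * A₀ * t) := by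
  refine ⟨10000, fun C₀' hC₀' => ?_⟩
  have hπ := Real.pi_pos
  have hC0 : (0:ℝ) ≤ C₀' := by linarith
  have hsqrt : (100:ℝ) ≤ Real.sqrt C₀' := by
    have : Real.sqrt 10000 ≤ Real.sqrt C₀' := Real.sqrt_le_sqrt hC₀'
    rwa [show (10000:ℝ) = 100^2 by norm_num, Real.sqrt_sq (by norm_num)] at this
  have hsC : Real.sqrt C₀' ≤ C₀' := by
    have h := Real.sqrt_le_sqrt (show C₀' ≤ C₀'^2 by nlinarith)
    rwa [Real.sqrt_sq hC0] at h
  set K : ℕ := ⌊Real.sqrt C₀'⌋₊ with hKdef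
  have hK100 : 100 ≤ K := Nat.le_floor hsqrt
  have hKle : (K:ℝ) ≤ Real.sqrt C₀' := Nat.floor_le (Real.sqrt_nonneg _)
  have hKpos : (0:ℝ) < K := by
    have : (100:ℝ) ≤ (K:ℝ) := by exact_mod_cast hK100
    linarith
  clear_value K
  refine ⟨⌈(8*C₀') ^ (τ⁻¹ : ℝ)⌉₊ + 1, fun n hn t ht hCond a L hsub hL ε₁ ε₂ hε₁ hε₂ A₀ hA₀ hA => ?_⟩
  -- basic bounds on n
  have hnR : (8*C₀') ^ (τ⁻¹ : ℝ) ≤ (n:ℝ) := by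
    have h1 : (8*C₀') ^ (τ⁻¹ : ℝ) ≤ (⌈(8*C₀') ^ (τ⁻¹ : ℝ)⌉₊ : ℝ) := Nat.le_ceil _
    have h2 : (⌈(8*C₀') ^ (τ⁻¹ : ℝ)⌉₊ + 1 : ℕ) ≤ n := hn
    have h3 : ((⌈(8*C₀') ^ (τ⁻¹ : ℝ)⌉₊ : ℝ) + 1) ≤ (n:ℝ) := by exact_mod_cast h2
    linarith
  have hn1 : (1:ℝ) ≤ (n:ℝ) := by
    have : 1 ≤ n := le_trans (Nat.le_add_left 1 _) hn
    exact_mod_cast this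
  have hnpos : (0:ℝ) < (n:ℝ) := by linarith
  have hτn : 8*C₀' ≤ (n:ℝ) ^ (τ:ℝ) := by
    have := Real.rpow_le_rpow (by positivity) hnR hτ.le
    rwa [Real.rpow_inv_rpow (by positivity) hτ.ne'] at this
  have h4τ : 8*C₀' ≤ (n:ℝ) ^ (4*τ) :=
    le_trans hτn (Real.rpow_le_rpow_of_exponent_le hn1 (by linarith))
  have hmid : (n:ℝ) ^ (4*τ) ≤ (n:ℝ) ^ (1-4*τ) :=
    Real.rpow_le_rpow_of_exponent_le hn1 (by linarith)
  have hLK : 2*(K:ℝ) ≤ (L:ℝ) := by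
    have : 2*(K:ℝ) ≤ 8*C₀' := by nlinarith
    linarith
  set δ : ℝ := (n:ℝ) ^ (-1 + 8*τ) with hδdef
  clear_value δ
  have hδpos : 0 < δ := by rw [hδdef]; exact Real.rpow_pos_of_pos hnpos _
  have hLδ : 8*C₀' ≤ (L:ℝ) * δ := by
    have h1 : (n:ℝ) ^ (1-4*τ) * δ ≤ (L:ℝ) * δ :=
      mul_le_mul_of_nonneg_right hL hδpos.le
    have h2 : (n:ℝ) ^ (1-4*τ) * δ = (n:ℝ) ^ (4*τ) := by
      rw [hδdef, ← Real.rpow_add hnpos]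
      norm_num
      ring_nf
    linarith
  -- Dirichlet approximation
  set α : ℝ := (A₀:ℝ) * t / (2*π) with hαdef
  clear_value α
  obtain ⟨m, q, hq0, hqK, hqm⟩ := Real.exists_int_int_abs_mul_sub_le α (show 0 < K by omega)
  set β : ℝ := (q:ℝ)*α - (m:ℝ) with hβdef
  clear_value β
  have hqKR : (q:ℝ) ≤ (K:ℝ) := by exact_mod_cast hqK
  have hq0R : (0:ℝ) < (q:ℝ) := by exact_mod_cast hq0
  have hβ8 : |β| ≤ 1/8 := by
    have h1 : |β| ≤ 1/((K:ℝ)+1) := hqm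
    have hKR : (100:ℝ) ≤ (K:ℝ) := by exact_mod_cast hK100
    have h2 : (1:ℝ)/((K:ℝ)+1) ≤ 1/8 := by
      rw [div_le_div_iff₀ (by linarith) (by norm_num)]
      linarith
    linarith
  -- lower bound on |β| from the Condition
  have hA1 : (1:ℝ) ≤ (A₀:ℝ) := by exact_mod_cast hA₀
  have hk0 : q * (A₀:ℤ) ≠ 0 := by
    have : (0:ℤ) < (A₀:ℤ) := by exact_mod_cast hA₀
    positivity
  have hkabs : |((q * (A₀:ℤ) : ℤ):ℝ)| ≤ C₀' := by
    push_cast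
    rw [abs_of_pos (by positivity)]
    have := Real.mul_self_sqrt hC0
    nlinarith [Real.sqrt_nonneg C₀']
  have hδβ := hCond (q * (A₀:ℤ)) hk0 hkabs (2*m)
  have hid : ((q * (A₀:ℤ) : ℤ):ℝ) * t / π - ((2*m : ℤ):ℝ) = 2*β := by
    push_cast
    rw [hβdef, hαdef]
    field_simp
  rw [hid, abs_mul, abs_two] at hδβ
  have hβlb : δ/2 < |β| := by rw [hδdef]; linarith
  have hβ0 : β ≠ 0 := by
    intro h
    rw [h, abs_zero] at hβlb
    linarith
  -- the number of steps
  set qn : ℕ := q.toNat with hqndef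
  clear_value qn
  have hqncast : (qn:ℝ) = (q:ℝ) := by
    rw [hqndef]
    exact_mod_cast Int.toNat_of_nonneg hq0.le
  have hqn1 : 1 ≤ qn := by
    have : (0:ℤ) < (qn:ℤ) := by rw [hqndef, Int.toNat_of_nonneg hq0.le]; exact hq0
    omega
  set M : ℕ := L / qn with hMdef
  clear_value M
  have hLM : (L:ℝ) < (qn:ℝ)*(M:ℝ) + (qn:ℝ) := by
    have h1 : qn * M + L % qn = L := by rw [hMdef]; exact Nat.div_add_mod L qn
    have h2 : L % qn < qn := Nat.mod_lt _ (by omega)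
    have : L < qn * M + qn := by omega
    exact_mod_cast this
  have hMlb : (L:ℝ) ≤ 2*(K:ℝ)*(M:ℝ) := by
    have hqnK : (qn:ℝ) ≤ (K:ℝ) := by rw [hqncast]; exact hqKR
    have hM0 : (0:ℝ) ≤ (M:ℝ) := Nat.cast_nonneg _
    nlinarith
  have hM2 : (2:ℝ) ≤ (M:ℝ)*|β| := by
    have hM0 : (0:ℝ) < (M:ℝ) := by nlinarith
    have h1 : (L:ℝ) * (δ/2) ≤ 2*(K:ℝ)*(M:ℝ) * |β| := by
      apply mul_le_mul hMlb hβlb.le (by positivity) (by positivity)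
    have h2 : 8*C₀' * (δ/2) ≤ (L:ℝ)*δ * (1/2) := by nlinarith
    have h3 : 2*(2*(K:ℝ)) ≤ 8*C₀'/2 := by nlinarith
    -- 2 ≤ M*|β| : from 4C₀' ≤ L*δ/... 
    nlinarith
  -- choose the quadrant and sweep
  obtain ⟨c, hc⟩ := quadrant ε₁ ε₂ hε₁ hε₂
  obtain ⟨j, hjM, p, hp1, hp2⟩ := sweep ((a:ℝ)*α) c β hβ0 hβ8 M hM2
  refine ⟨a + j*qn, ?_, ?_⟩
  · rw [Finset.mem_Icc]
    refine ⟨Nat.le_add_right _ _, Nat.add_le_add_left ?_ a⟩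
    calc j*qn ≤ M*qn := Nat.mul_le_mul_right _ hjM
    _ = L/qn*qn := by rw [hMdef]
    _ ≤ L := Nat.div_mul_le_self _ _
  · have hq : (q:ℝ)*α = β + (m:ℝ) := by rw [hβdef]; ring
    have hiα : ((a + j*qn : ℕ):ℝ) * α = ((a:ℝ)*α + (j:ℝ)*β) + (j:ℝ)*(m:ℝ) := by
      push_cast
      rw [hqncast]
      linear_combination (j:ℝ) * hq
    set P : ℤ := p + (j:ℤ)*m with hPdef
    clear_value P
    have hPc : ((P:ℤ):ℝ) = (p:ℝ) + (j:ℝ)*(m:ℝ) := by rw [hPdef]; push_cast; ring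
    have hb1 : c + (P:ℝ) < ((a + j*qn : ℕ):ℝ) * α := by rw [hiα, hPc]; linarith
    have hb2 : ((a + j*qn : ℕ):ℝ) * α < c + (P:ℝ) + 1/4 := by rw [hiα, hPc]; linarith
    set y : ℝ := ((a + j*qn : ℕ):ℝ) * (A₀:ℝ) * t - (P:ℝ)*(2*π) with hydef
    clear_value y
    have hxy : ((a + j*qn : ℕ):ℝ) * (A₀:ℝ) * t = 2*π*(((a + j*qn : ℕ):ℝ) * α) := by
      rw [hαdef]
      field_simp
    have h2π : (0:ℝ) < 2*π := by linarith
    have hz1 := (mul_lt_mul_iff_right₀ h2π).mpr hb1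
    have hz2 := (mul_lt_mul_iff_right₀ h2π).mpr hb2
    have hy1 : 2*π*c < y := by rw [hydef, hxy]; linarith
    have hy2 : y < 2*π*c + π/2 := by rw [hydef, hxy]; linarith
    obtain ⟨hs, hcc⟩ := hc y hy1 hy2
    have hrw : ((a + j*qn : ℕ):ℝ) * (A₀:ℝ) * t = y + (P:ℝ)*(2*π) := by rw [hydef]; ring
    rw [hrw, Real.sin_add_int_mul_two_pi, Real.cos_add_int_mul_two_pi]
    exact ⟨hs, hcc⟩
end

section
/- (Separation lemma) Let μ, ν > 0, let I = (a,b) be an open interval with b − a > 2μ/ν, and let f be a C¹ function on I such that at each point x ∈ I either |f(x)| > μ or |f'(x)| > ν. Let Z = { x ∈ I : f(x) = 0, x − a > μ/ν, b − x > μ/ν }. Then there exist functions a', b' : Z → ℝ such that for every x₀ ∈ Z: x₀ − μ/ν < a'(x₀) < x₀ < b'(x₀) < x₀ + μ/ν, f(a'(x₀)) · f(b'(x₀)) < 0, |f(a'(x₀))| = |f(b'(x₀))| = μ, and the open intervals (a'(x₀), b'(x₀)) for distinct points of Z are pairwise disjoint. -/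
open Set

lemma nearest_cross (μ ν : ℝ) (hμ : 0 < μ) (hν : 0 < ν)
    (f f' : ℝ → ℝ) (x₀ c : ℝ) (hc : x₀ + μ / ν = c)
    (hF : ∀ x ∈ Icc x₀ c, HasDerivAt f (f' x) x)
    (hrep : ∀ x ∈ Icc x₀ c, μ < |f x| ∨ ν < |f' x|)
    (hf0 : f x₀ = 0) :
    ∃ B ∈ Ioo x₀ c, |f B| = μ ∧ ∀ t ∈ Ico x₀ B, |f t| < μ := by
  have hμν : 0 < μ / ν := div_pos hμ hν
  have hx₀c : x₀ < c := by rw [← hc]; linarith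
  have hcontf : ContinuousOn f (Icc x₀ c) := fun x hx =>
    (hF x hx).continuousAt.continuousWithinAt
  have habs : ContinuousOn (fun t => |f t|) (Icc x₀ c) := hcontf.abs
  -- IVT helper
  have hiv : ∀ t ∈ Icc x₀ c, μ ≤ |f t| → ∃ s ∈ Icc x₀ t, |f s| = μ := by
    intro t ht hμt
    have hsub : Icc x₀ t ⊆ Icc x₀ c := Icc_subset_Icc le_rfl ht.2
    have := intermediate_value_Icc ht.1 (habs.mono hsub)
    have hmem : μ ∈ (fun t => |f t|) '' Icc x₀ t := by
      apply this
      constructor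
      · simp [hf0]; exact hμ.le
      · simpa using hμt
    obtain ⟨s, hs, hfs⟩ := hmem
    exact ⟨s, hs, hfs⟩
  -- MVT helper : on any subinterval where |f| < μ strictly inside
  set S := {t | t ∈ Icc x₀ c ∧ |f t| = μ} with hSdef
  have hSclosed : IsClosed S := by
    have : S = Icc x₀ c ∩ (fun t => |f t|) ⁻¹' {μ} := by
      ext t; simp [hSdef, and_comm]
    rw [this]
    exact habs.preimage_isClosed_of_isClosed isClosed_Icc isClosed_singleton
  have hSsub : S ⊆ Icc x₀ c := fun t ht => ht.1
  have hSbdd : BddBelow S := (bddBelow_Icc).mono hSsub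
  -- nonempty
  have hSne : S.Nonempty := by
    by_contra hne
    rw [Set.not_nonempty_iff_eq_empty] at hne
    have hlt : ∀ t ∈ Icc x₀ c, |f t| < μ := by
      intro t ht
      by_contra hge
      push_neg at hge
      obtain ⟨s, hs, hfs⟩ := hiv t ht hge
      have : s ∈ S := ⟨Icc_subset_Icc le_rfl ht.2 hs, hfs⟩
      rw [hne] at this; exact this
    obtain ⟨ξ, hξ, hslope⟩ := exists_hasDerivAt_eq_slope f f' hx₀c hcontf
      (fun x hx => hF x (Ioo_subset_Icc_self hx))
    have hξI : ξ ∈ Icc x₀ c := Ioo_subset_Icc_self hξ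
    have hf'ξ : ν < |f' ξ| := (hrep ξ hξI).resolve_left (by push_neg; exact (hlt ξ hξI).le)
    have hcx : c - x₀ = μ / ν := by rw [← hc]; ring
    have : |f c| = |f' ξ| * (μ / ν) := by
      rw [hslope, hf0, sub_zero, abs_div, hcx, abs_of_pos hμν]
      field_simp
    have h2 : μ < |f c| := by
      rw [this]
      calc μ = ν * (μ / ν) := by field_simp
      _ < |f' ξ| * (μ / ν) := by apply mul_lt_mul_of_pos_right hf'ξ hμν
    exact absurd (hlt c ⟨hx₀c.le, le_rfl⟩) (not_lt.mpr h2.le)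
  set B := sInf S with hBdef
  have hBS : B ∈ S := hSclosed.csInf_mem hSne hSbdd
  have hBI : B ∈ Icc x₀ c := hBS.1
  have hfB : |f B| = μ := hBS.2
  have hx₀B : x₀ < B := by
    rcases lt_or_eq_of_le hBI.1 with h | h
    · exact h
    · exfalso; rw [← h, hf0] at hfB; simp at hfB; linarith
  have hlt : ∀ t ∈ Ico x₀ B, |f t| < μ := by
    intro t ht
    by_contra hge
    push_neg at hge
    have htI : t ∈ Icc x₀ c := ⟨ht.1, ht.2.le.trans hBI.2⟩
    obtain ⟨s, hs, hfs⟩ := hiv t htI hge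
    have hsS : s ∈ S := ⟨⟨hs.1, hs.2.trans htI.2⟩, hfs⟩
    have : B ≤ s := csInf_le hSbdd hsS
    linarith [hs.2, ht.2]
  refine ⟨B, ⟨hx₀B, ?_⟩, hfB, hlt⟩
  rcases lt_or_eq_of_le hBI.2 with h | h
  · exact h
  exfalso
  obtain ⟨ξ, hξ, hslope⟩ := exists_hasDerivAt_eq_slope f f' hx₀B
    (hcontf.mono (Icc_subset_Icc le_rfl hBI.2))
    (fun x hx => hF x ⟨hx.1.le, hx.2.le.trans hBI.2⟩)
  have hξI : ξ ∈ Icc x₀ c := ⟨hξ.1.le, hξ.2.le.trans hBI.2⟩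
  have hf'ξ : ν < |f' ξ| :=
    (hrep ξ hξI).resolve_left (by push_neg; exact (hlt ξ ⟨hξ.1.le, hξ.2⟩).le)
  have hcx : B - x₀ = μ / ν := by rw [h, ← hc]; ring
  have heq : |f B| = |f' ξ| * (μ / ν) := by
    rw [hslope, hf0, sub_zero, abs_div, hcx, abs_of_pos hμν]
    field_simp
  have h2 : μ < |f B| := by
    rw [heq]
    calc μ = ν * (μ / ν) := by field_simp
    _ < |f' ξ| * (μ / ν) := mul_lt_mul_of_pos_right hf'ξ hμν
  rw [hfB] at h2; exact lt_irrefl μ h2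

lemma key_point (μ ν a b : ℝ) (hμ : 0 < μ) (hν : 0 < ν)
    (f f' : ℝ → ℝ)
    (hderiv : ∀ x ∈ Set.Ioo a b, HasDerivAt f (f' x) x)
    (hcont : ContinuousOn f' (Set.Ioo a b))
    (hrep : ∀ x ∈ Set.Ioo a b, μ < |f x| ∨ ν < |f' x|)
    (x₀ : ℝ) (hx : x₀ ∈ Set.Ioo a b) (h0 : f x₀ = 0)
    (ha : μ / ν < x₀ - a) (hb : μ / ν < b - x₀) :
    ∃ A B : ℝ, x₀ - μ / ν < A ∧ A < x₀ ∧ x₀ < B ∧ B < x₀ + μ / ν ∧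
      f A * f B < 0 ∧ |f A| = μ ∧ |f B| = μ ∧
      (∀ t ∈ Set.Ioo A B, |f t| < μ) ∧
      (∀ t ∈ Set.Ioo A B, f t = 0 → t = x₀) := by
  have hμν : 0 < μ / ν := div_pos hμ hν
  have hsub : Icc (x₀ - μ / ν) (x₀ + μ / ν) ⊆ Set.Ioo a b := by
    intro t ht
    exact ⟨by linarith [ht.1], by linarith [ht.2]⟩
  -- right point B
  obtain ⟨B, hBmem, hfB, hBlt⟩ := nearest_cross μ ν hμ hν f f' x₀ (x₀ + μ / ν) rfl
    (fun x hxx => hderiv x (hsub ⟨by linarith [hxx.1], hxx.2⟩))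
    (fun x hxx => hrep x (hsub ⟨by linarith [hxx.1], hxx.2⟩)) h0
  -- left point A via reflection
  have hnegmem : ∀ x : ℝ, x ∈ Icc (-x₀) (-x₀ + μ / ν) → -x ∈ Set.Ioo a b := by
    intro x hxx
    exact hsub ⟨by linarith [hxx.2], by linarith [hxx.1]⟩
  obtain ⟨B', hB'mem, hfB', hB'lt⟩ := nearest_cross μ ν hμ hν (fun t => f (-t))
    (fun t => -f' (-t)) (-x₀) (-x₀ + μ / ν) rfl
    (fun x hxx => by
      have := (hderiv (-x) (hnegmem x hxx)).comp x (hasDerivAt_neg x)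
      simpa [Function.comp_def, mul_neg_one] using this)
    (fun x hxx => by simpa [abs_neg] using hrep (-x) (hnegmem x hxx))
    (by simpa using h0)
  set A := -B' with hAdef
  have hAmem : x₀ - μ / ν < A ∧ A < x₀ := by
    constructor
    · have := hB'mem.2; simp [hAdef]; linarith
    · have := hB'mem.1; simp [hAdef]; linarith
  have hfA : |f A| = μ := by simpa [hAdef] using hfB'
  have hAlt : ∀ t ∈ Ioc A x₀, |f t| < μ := by
    intro t ht
    have : -t ∈ Ico (-x₀) B' := ⟨by linarith [ht.2], by
      have := ht.1; simp only [hAdef] at this; linarith⟩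
    simpa using hB'lt (-t) this
  have hAx₀ : A < x₀ := hAmem.2
  have hx₀B : x₀ < B := hBmem.1
  have hAB : A < B := hAx₀.trans hx₀B
  have hIccsub : Icc A B ⊆ Set.Ioo a b := by
    intro t ht
    apply hsub
    exact ⟨by linarith [ht.1, hAmem.1], by linarith [ht.2, hBmem.2]⟩
  -- |f| < μ on (A,B)
  have hsmall : ∀ t ∈ Set.Ioo A B, |f t| < μ := by
    intro t ht
    rcases le_or_gt t x₀ with h | h
    · exact hAlt t ⟨ht.1, h⟩
    · exact hBlt t ⟨h.le, ht.2⟩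
  -- |f'| > ν on [A,B]
  have hder : ∀ t ∈ Icc A B, ν < |f' t| := by
    intro t ht
    have hle : |f t| ≤ μ := by
      rcases eq_or_lt_of_le ht.1 with h | h
      · rw [← h]; exact hfA.le
      rcases eq_or_lt_of_le ht.2 with h2 | h2
      · rw [h2]; exact hfB.le
      exact (hsmall t ⟨h, h2⟩).le
    exact (hrep t (hIccsub ht)).resolve_left (not_lt.mpr hle)
  -- sign constancy of f' on [A,B]
  have hsc : (∀ t ∈ Icc A B, 0 < f' t) ∨ (∀ t ∈ Icc A B, f' t < 0) := by
    by_contra h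
    push_neg at h
    obtain ⟨⟨t₁, ht₁, ht₁'⟩, ⟨t₂, ht₂, ht₂'⟩⟩ := h
    have huIccsub : uIcc t₁ t₂ ⊆ Icc A B := uIcc_subset_Icc ht₁ ht₂
    have h0mem : (0:ℝ) ∈ uIcc (f' t₁) (f' t₂) := by
      rw [Set.mem_uIcc]; left; exact ⟨ht₁', ht₂'⟩
    obtain ⟨ξ, hξ, hfξ⟩ := intermediate_value_uIcc
      (hcont.mono (huIccsub.trans hIccsub)) h0mem
    have := hder ξ (huIccsub hξ)
    rw [hfξ] at this; simp at this; linarith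
  have hcontf : ContinuousOn f (Icc A B) := fun t ht =>
    (hderiv t (hIccsub ht)).continuousAt.continuousWithinAt
  have hx₀I : x₀ ∈ Icc A B := ⟨hAx₀.le, hx₀B.le⟩
  have hAI : A ∈ Icc A B := ⟨le_rfl, hAB.le⟩
  have hBI : B ∈ Icc A B := ⟨hAB.le, le_rfl⟩
  have hintI : interior (Icc A B) = Set.Ioo A B := interior_Icc
  have hderivW : ∀ t ∈ interior (Icc A B),
      HasDerivWithinAt f (f' t) (interior (Icc A B)) t := by
    intro t ht
    exact (hderiv t (hIccsub (interior_subset ht))).hasDerivWithinAt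
  rcases hsc with hpos | hneg
  · have hmono : StrictMonoOn f (Icc A B) :=
      strictMonoOn_of_hasDerivWithinAt_pos (convex_Icc A B) hcontf hderivW
        (fun t ht => hpos t (interior_subset ht))
    have hfApos : f A < 0 := by
      have := hmono hAI hx₀I hAx₀; rwa [h0] at this
    have hfBpos : 0 < f B := by
      have := hmono hx₀I hBI hx₀B; rwa [h0] at this
    refine ⟨A, B, hAmem.1, hAx₀, hx₀B, hBmem.2,
      mul_neg_of_neg_of_pos hfApos hfBpos, hfA, hfB, hsmall, ?_⟩
    intro t ht hft
    exact hmono.injOn (Ioo_subset_Icc_self ht) hx₀I (by rw [hft, h0])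
  · have hmono : StrictAntiOn f (Icc A B) :=
      strictAntiOn_of_hasDerivWithinAt_neg (convex_Icc A B) hcontf hderivW
        (fun t ht => hneg t (interior_subset ht))
    have hfApos : 0 < f A := by
      have := hmono hAI hx₀I hAx₀; rwa [h0] at this
    have hfBpos : f B < 0 := by
      have := hmono hx₀I hBI hx₀B; rwa [h0] at this
    refine ⟨A, B, hAmem.1, hAx₀, hx₀B, hBmem.2,
      mul_neg_of_pos_of_neg hfApos hfBpos, hfA, hfB, hsmall, ?_⟩
    intro t ht hft
    exact hmono.injOn (Ioo_subset_Icc_self ht) hx₀I (by rw [hft, h0])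

theorem stmt18 (μ ν a b : ℝ) (hμ : 0 < μ) (hν : 0 < ν)
    (hab : 2 * μ / ν < b - a)
    (f f' : ℝ → ℝ)
    (hderiv : ∀ x ∈ Set.Ioo a b, HasDerivAt f (f' x) x)
    (hcont : ContinuousOn f' (Set.Ioo a b))
    (hrep : ∀ x ∈ Set.Ioo a b, μ < |f x| ∨ ν < |f' x|) :
    ∃ A B : ℝ → ℝ,
      (∀ x₀, x₀ ∈ Set.Ioo a b → f x₀ = 0 → μ / ν < x₀ - a → μ / ν < b - x₀ →
        x₀ - μ / ν < A x₀ ∧ A x₀ < x₀ ∧ x₀ < B x₀ ∧ B x₀ < x₀ + μ / ν ∧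
        f (A x₀) * f (B x₀) < 0 ∧ |f (A x₀)| = μ ∧ |f (B x₀)| = μ) ∧
      (∀ x₀ y₀, x₀ ∈ Set.Ioo a b → f x₀ = 0 → μ / ν < x₀ - a → μ / ν < b - x₀ →
        y₀ ∈ Set.Ioo a b → f y₀ = 0 → μ / ν < y₀ - a → μ / ν < b - y₀ →
        x₀ ≠ y₀ →
        Disjoint (Set.Ioo (A x₀) (B x₀)) (Set.Ioo (A y₀) (B y₀))) := by
  have H := key_point μ ν a b hμ hν f f' hderiv hcont hrep
  choose! A B h1 h2 h3 h4 h5 h6 h7 h8 h9 using H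
  refine ⟨A, B, ?_, ?_⟩
  · intro x₀ hx h0 hA hB
    exact ⟨h1 x₀ hx h0 hA hB, h2 x₀ hx h0 hA hB, h3 x₀ hx h0 hA hB,
      h4 x₀ hx h0 hA hB, h5 x₀ hx h0 hA hB, h6 x₀ hx h0 hA hB, h7 x₀ hx h0 hA hB⟩
  · intro x₀ y₀ hx h0x hax hbx hy h0y hay hby hne
    by_contra hnd
    rw [Set.not_disjoint_iff] at hnd
    obtain ⟨t, ht1, ht2⟩ := hnd
    have h8x := h8 x₀ hx h0x hax hbx
    have h8y := h8 y₀ hy h0y hay hby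
    have h6x := h6 x₀ hx h0x hax hbx
    have h7x := h7 x₀ hx h0x hax hbx
    have h6y := h6 y₀ hy h0y hay hby
    have h7y := h7 y₀ hy h0y hay hby
    have hpr : A x₀ = A y₀ := by
      rcases lt_trichotomy (A x₀) (A y₀) with h | h | h
      · exfalso
        have : A y₀ ∈ Set.Ioo (A x₀) (B x₀) := ⟨h, lt_trans ht2.1 ht1.2⟩
        have := h8x _ this
        rw [h6y] at this; exact lt_irrefl μ this
      · exact h
      · exfalso
        have : A x₀ ∈ Set.Ioo (A y₀) (B y₀) := ⟨h, lt_trans ht1.1 ht2.2⟩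
        have := h8y _ this
        rw [h6x] at this; exact lt_irrefl μ this
    have hqs : B x₀ = B y₀ := by
      rcases lt_trichotomy (B x₀) (B y₀) with h | h | h
      · exfalso
        have : B x₀ ∈ Set.Ioo (A y₀) (B y₀) := ⟨lt_trans ht2.1 ht1.2, h⟩
        have := h8y _ this
        rw [h7x] at this; exact lt_irrefl μ this
      · exact h
      · exfalso
        have : B y₀ ∈ Set.Ioo (A x₀) (B x₀) := ⟨lt_trans ht1.1 ht2.2, h⟩
        have := h8x _ this
        rw [h7y] at this; exact lt_irrefl μ this
    have hymem : y₀ ∈ Set.Ioo (A x₀) (B x₀) := by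
      rw [hpr, hqs]
      exact ⟨h2 y₀ hy h0y hay hby, h3 y₀ hy h0y hay hby⟩
    exact hne ((h9 x₀ hx h0x hax hbx y₀ hymem h0y).symm)
end

section
/- Let μ, ν > 0, let I = (a,b) be an open interval with b − a > 2μ/ν, and let f be a C¹ function on I such that at each point x ∈ I either |f(x)| > μ or |f'(x)| > ν. Let g be a continuous function on I with |g(x)| < μ for all x ∈ I. Let Z = { x ∈ I : f(x) = 0, x − a > μ/ν, b − x > μ/ν }. Then there exists an injective map φ : Z → I such that for every x₀ ∈ Z one has (f + g)(φ(x₀)) = 0 and |φ(x₀) − x₀| < μ/ν. -/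
open Set

private lemma stmt19_aux (μ ν a b : ℝ) (hμ : 0 < μ) (hν : 0 < ν)
    (f f' g : ℝ → ℝ)
    (hderiv : ∀ x ∈ Set.Ioo a b, HasDerivAt f (f' x) x)
    (hcont : ContinuousOn f' (Set.Ioo a b))
    (hrep : ∀ x ∈ Set.Ioo a b, μ < |f x| ∨ ν < |f' x|)
    (hgcont : ContinuousOn g (Set.Ioo a b))
    (hg : ∀ x ∈ Set.Ioo a b, |g x| < μ)
    (x₀ : ℝ) (hx₀ : x₀ ∈ Set.Ioo a b) (hfx₀ : f x₀ = 0)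
    (hA : μ / ν < x₀ - a) (hB : μ / ν < b - x₀)
    (hsign : 0 < f' x₀) :
    ∃ y, f y + g y = 0 ∧ y ∈ Set.Ioo a b ∧ |y - x₀| < μ / ν ∧
      ∀ t ∈ Set.Icc (min x₀ y) (max x₀ y), |f t| ≤ μ := by
  set r : ℝ := μ / ν with hr_def
  have hr : 0 < r := div_pos hμ hν
  have hrν : ν * r = μ := by rw [hr_def]; field_simp [hν.ne']
  have hxl : a < x₀ - r := by linarith
  have hxr : x₀ + r < b := by linarith
  have hsub : Icc (x₀ - r) (x₀ + r) ⊆ Ioo a b := fun t ht => ⟨lt_of_lt_of_le hxl ht.1,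
    lt_of_le_of_lt ht.2 hxr⟩
  have fcont : ContinuousOn f (Ioo a b) := fun x hx =>
    (hderiv x hx).continuousAt.continuousWithinAt
  -- sign lemma
  have signlem : ∀ p q : ℝ, a < p → q < b → x₀ ∈ Icc p q →
      (∀ u ∈ Icc p q, |f u| ≤ μ) → ∀ t ∈ Icc p q, ν < f' t := by
    intro p q hp hq hxpq hsmall t ht
    have hJI : Icc p q ⊆ Ioo a b := fun u hu =>
      ⟨lt_of_lt_of_le hp hu.1, lt_of_le_of_lt hu.2 hq⟩
    have h1 : ∀ u ∈ Icc p q, ν < |f' u| := fun u hu =>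
      (hrep u (hJI hu)).resolve_left (not_lt.2 (hsmall u hu))
    by_contra hle
    push_neg at hle
    have htneg : f' t < 0 := by
      rcases lt_abs.1 (h1 t ht) with h | h
      · linarith
      · linarith
    have hzero : ∃ ξ ∈ Icc p q, f' ξ = 0 := by
      rcases le_total t x₀ with htx | htx
      · have hcont' : ContinuousOn f' (Icc t x₀) := hcont.mono fun u hu =>
          hJI ⟨le_trans ht.1 hu.1, le_trans hu.2 hxpq.2⟩
        have := intermediate_value_Icc htx hcont'
        have h0 : (0 : ℝ) ∈ Icc (f' t) (f' x₀) := ⟨le_of_lt htneg, le_of_lt hsign⟩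
        obtain ⟨ξ, hξ, hξ0⟩ := this h0
        exact ⟨ξ, ⟨le_trans ht.1 hξ.1, le_trans hξ.2 hxpq.2⟩, hξ0⟩
      · have hcont' : ContinuousOn f' (Icc x₀ t) := hcont.mono fun u hu =>
          hJI ⟨le_trans hxpq.1 hu.1, le_trans hu.2 ht.2⟩
        have := intermediate_value_Icc' htx hcont'
        have h0 : (0 : ℝ) ∈ Icc (f' t) (f' x₀) := ⟨le_of_lt htneg, le_of_lt hsign⟩
        obtain ⟨ξ, hξ, hξ0⟩ := this h0
        exact ⟨ξ, ⟨le_trans hxpq.1 hξ.1, le_trans hξ.2 ht.2⟩, hξ0⟩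
    obtain ⟨ξ, hξ, hξ0⟩ := hzero
    rcases hrep ξ (hJI hξ) with h | h
    · exact absurd (hsmall ξ hξ) (not_le.2 h)
    · rw [hξ0] at h; simp at h; linarith
  -- right endpoint
  have hd : ∃ d, x₀ < d ∧ d ≤ x₀ + r ∧ μ ≤ f d ∧ ∀ t ∈ Ico x₀ d, |f t| < μ := by
    set T : Set ℝ := Icc x₀ (x₀ + r) ∩ {t | μ ≤ |f t|} with hT_def
    have hIccsub : Icc x₀ (x₀ + r) ⊆ Ioo a b := fun t ht =>
      ⟨lt_of_lt_of_le (by linarith : a < x₀) ht.1, lt_of_le_of_lt ht.2 hxr⟩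
    have hTclosed : IsClosed T := by
      apply ContinuousOn.preimage_isClosed_of_isClosed
        ((continuous_abs.comp_continuousOn (fcont.mono hIccsub)))
        isClosed_Icc (isClosed_Ici)
    have hTne : T.Nonempty := by
      by_contra hemp
      rw [Set.not_nonempty_iff_eq_empty] at hemp
      have hsmall : ∀ u ∈ Icc x₀ (x₀ + r), |f u| ≤ μ := by
        intro u hu
        by_contra hgt
        have : u ∈ T := ⟨hu, le_of_lt (lt_of_not_ge hgt)⟩
        rw [hemp] at this; exact this
      obtain ⟨ξ, hξ, hslope⟩ := exists_hasDerivAt_eq_slope f f'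
        (by linarith : x₀ < x₀ + r) (fcont.mono hIccsub)
        (fun x hx => hderiv x (hIccsub (Ioo_subset_Icc_self hx)))
      have hξν : ν < f' ξ := signlem x₀ (x₀ + r) hx₀.1 hxr
        ⟨le_refl _, by linarith⟩ hsmall ξ (Ioo_subset_Icc_self hξ)
      have hval : f (x₀ + r) = f' ξ * r := by
        rw [hfx₀] at hslope
        have : x₀ + r - x₀ = r := by ring
        rw [this, sub_zero] at hslope
        field_simp at hslope
        linarith [hslope]
      have : μ < f (x₀ + r) := by
        rw [hval]
        calc μ = ν * r := hrν.symm
        _ < f' ξ * r := by exact mul_lt_mul_of_pos_right hξν hr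
      have h2 := hsmall (x₀ + r) ⟨by linarith, le_refl _⟩
      have := le_abs_self (f (x₀ + r))
      linarith
    have hTbdd : BddBelow T := ⟨x₀, fun t ht => ht.1.1⟩
    set d := sInf T with hd_def
    have hdT : d ∈ T := hTclosed.csInf_mem hTne hTbdd
    have hd1 : x₀ ≤ d := hdT.1.1
    have hd2 : d ≤ x₀ + r := hdT.1.2
    have hdabs : μ ≤ |f d| := hdT.2
    have hdne : x₀ ≠ d := by
      intro h
      rw [← h, hfx₀] at hdabs; simp at hdabs; linarith
    have hdlt : x₀ < d := lt_of_le_of_ne hd1 hdne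
    have hIco : ∀ t ∈ Ico x₀ d, |f t| < μ := by
      intro t ht
      by_contra hge
      have : t ∈ T := ⟨⟨ht.1, le_trans (le_of_lt ht.2) hd2⟩, show μ ≤ |f t| from not_lt.1 hge⟩
      have := csInf_le hTbdd this
      exact absurd ht.2 (not_lt.2 this)
    have hIccd : Icc x₀ d ⊆ Ioo a b := fun t ht =>
      hIccsub ⟨ht.1, le_trans ht.2 hd2⟩
    have hmono : StrictMonoOn f (Icc x₀ d) := by
      apply strictMonoOn_of_deriv_pos (convex_Icc _ _) (fcont.mono hIccd)
      intro t ht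
      rw [interior_Icc] at ht
      have htmem : t ∈ Ioo a b := hIccd (Ioo_subset_Icc_self ht)
      rw [(hderiv t htmem).deriv]
      have : ν < f' t := signlem x₀ t hx₀.1 htmem.2 ⟨le_refl _, le_of_lt ht.1⟩
        (fun u hu => le_of_lt (hIco u ⟨hu.1, lt_of_le_of_lt hu.2 ht.2⟩)) t
        ⟨le_of_lt ht.1, le_refl _⟩
      linarith
    have hfd_pos : 0 < f d := by
      have := hmono ⟨le_refl _, le_of_lt hdlt⟩ ⟨le_of_lt hdlt, le_refl _⟩ hdlt
      rw [hfx₀] at this; exact this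
    have : μ ≤ f d := by rwa [abs_of_pos hfd_pos] at hdabs
    exact ⟨d, hdlt, hd2, this, hIco⟩
  -- left endpoint
  have hc : ∃ c, c < x₀ ∧ x₀ - r ≤ c ∧ f c ≤ -μ ∧ ∀ t ∈ Ioc c x₀, |f t| < μ := by
    set T : Set ℝ := Icc (x₀ - r) x₀ ∩ {t | μ ≤ |f t|} with hT_def
    have hIccsub : Icc (x₀ - r) x₀ ⊆ Ioo a b := fun t ht =>
      ⟨lt_of_lt_of_le hxl ht.1, lt_of_le_of_lt ht.2 hx₀.2⟩
    have hTclosed : IsClosed T := by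
      apply ContinuousOn.preimage_isClosed_of_isClosed
        ((continuous_abs.comp_continuousOn (fcont.mono hIccsub)))
        isClosed_Icc (isClosed_Ici)
    have hTne : T.Nonempty := by
      by_contra hemp
      rw [Set.not_nonempty_iff_eq_empty] at hemp
      have hsmall : ∀ u ∈ Icc (x₀ - r) x₀, |f u| ≤ μ := by
        intro u hu
        by_contra hgt
        have : u ∈ T := ⟨hu, le_of_lt (lt_of_not_ge hgt)⟩
        rw [hemp] at this; exact this
      obtain ⟨ξ, hξ, hslope⟩ := exists_hasDerivAt_eq_slope f f'
        (by linarith : x₀ - r < x₀) (fcont.mono hIccsub)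
        (fun x hx => hderiv x (hIccsub (Ioo_subset_Icc_self hx)))
      have hξν : ν < f' ξ := signlem (x₀ - r) x₀ hxl hx₀.2
        ⟨by linarith, le_refl _⟩ hsmall ξ (Ioo_subset_Icc_self hξ)
      have hval : f (x₀ - r) = -(f' ξ * r) := by
        rw [hfx₀] at hslope
        have : x₀ - (x₀ - r) = r := by ring
        rw [this, zero_sub] at hslope
        field_simp at hslope
        linarith [hslope]
      have : f (x₀ - r) < -μ := by
        rw [hval]
        have : μ < f' ξ * r := by
          calc μ = ν * r := hrν.symm
          _ < f' ξ * r := mul_lt_mul_of_pos_right hξν hr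
        linarith
      have h2 := hsmall (x₀ - r) ⟨le_refl _, by linarith⟩
      have := neg_abs_le (f (x₀ - r))
      linarith
    have hTbdd : BddAbove T := ⟨x₀, fun t ht => ht.1.2⟩
    set c := sSup T with hc_def
    have hcT : c ∈ T := hTclosed.csSup_mem hTne hTbdd
    have hc1 : x₀ - r ≤ c := hcT.1.1
    have hc2 : c ≤ x₀ := hcT.1.2
    have hcabs : μ ≤ |f c| := hcT.2
    have hcne : c ≠ x₀ := by
      intro h
      rw [h, hfx₀] at hcabs; simp at hcabs; linarith
    have hclt : c < x₀ := lt_of_le_of_ne hc2 hcne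
    have hIoc : ∀ t ∈ Ioc c x₀, |f t| < μ := by
      intro t ht
      by_contra hge
      have : t ∈ T := ⟨⟨le_trans hc1 (le_of_lt ht.1), ht.2⟩, show μ ≤ |f t| from not_lt.1 hge⟩
      have := le_csSup hTbdd this
      exact absurd ht.1 (not_lt.2 this)
    have hIccc : Icc c x₀ ⊆ Ioo a b := fun t ht =>
      hIccsub ⟨le_trans hc1 ht.1, ht.2⟩
    have hmono : StrictMonoOn f (Icc c x₀) := by
      apply strictMonoOn_of_deriv_pos (convex_Icc _ _) (fcont.mono hIccc)
      intro t ht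
      rw [interior_Icc] at ht
      have htmem : t ∈ Ioo a b := hIccc (Ioo_subset_Icc_self ht)
      rw [(hderiv t htmem).deriv]
      have : ν < f' t := signlem t x₀ htmem.1 hx₀.2 ⟨le_of_lt ht.2, le_refl _⟩
        (fun u hu => le_of_lt (hIoc u ⟨lt_of_lt_of_le ht.1 hu.1, hu.2⟩)) t
        ⟨le_refl _, le_of_lt ht.2⟩
      linarith
    have hfc_neg : f c < 0 := by
      have := hmono ⟨le_refl _, le_of_lt hclt⟩ ⟨le_of_lt hclt, le_refl _⟩ hclt
      rw [hfx₀] at this; linarith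
    have : f c ≤ -μ := by
      rw [abs_of_neg hfc_neg] at hcabs; linarith
    exact ⟨c, hclt, hc1, this, hIoc⟩
  obtain ⟨d, hdlt, hd2, hfd, hIco⟩ := hd
  obtain ⟨c, hclt, hc1, hfc, hIoc⟩ := hc
  -- IVT for f + g
  have hcd : c < d := lt_trans hclt hdlt
  have hIcccd : Icc c d ⊆ Ioo a b := fun t ht =>
    hsub ⟨le_trans hc1 ht.1, le_trans ht.2 hd2⟩
  have hcmem : c ∈ Ioo a b := hIcccd ⟨le_refl _, le_of_lt hcd⟩
  have hdmem : d ∈ Ioo a b := hIcccd ⟨le_of_lt hcd, le_refl _⟩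
  have hsumcont : ContinuousOn (fun t => f t + g t) (Icc c d) :=
    (fcont.mono hIcccd).add (hgcont.mono hIcccd)
  have hhc : f c + g c < 0 := by
    have := (abs_lt.1 (hg c hcmem)).2
    linarith
  have hhd : 0 < f d + g d := by
    have := (abs_lt.1 (hg d hdmem)).1
    linarith
  have h0mem : (0 : ℝ) ∈ Ioo (f c + g c) (f d + g d) := ⟨hhc, hhd⟩
  obtain ⟨y, hy, hy0⟩ := intermediate_value_Ioo (le_of_lt hcd) hsumcont h0mem
  refine ⟨y, hy0, hIcccd (Ioo_subset_Icc_self hy), ?_, ?_⟩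
  · rw [abs_sub_lt_iff]
    constructor
    · have : y < d := hy.2
      linarith
    · have : c < y := hy.1
      linarith
  · intro t ht
    rcases le_total t x₀ with h | h
    · have htc : c < t := lt_of_lt_of_le (lt_min hclt hy.1) ht.1
      exact le_of_lt (hIoc t ⟨htc, h⟩)
    · have htd : t < d := lt_of_le_of_lt ht.2 (max_lt hdlt hy.2)
      exact le_of_lt (hIco t ⟨h, htd⟩)

theorem stmt19 (μ ν a b : ℝ) (hμ : 0 < μ) (hν : 0 < ν)
    (hab : 2 * μ / ν < b - a)
    (f f' g : ℝ → ℝ)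
    (hderiv : ∀ x ∈ Set.Ioo a b, HasDerivAt f (f' x) x)
    (hcont : ContinuousOn f' (Set.Ioo a b))
    (hrep : ∀ x ∈ Set.Ioo a b, μ < |f x| ∨ ν < |f' x|)
    (hgcont : ContinuousOn g (Set.Ioo a b))
    (hg : ∀ x ∈ Set.Ioo a b, |g x| < μ) :
    ∃ φ : ℝ → ℝ,
      Set.InjOn φ {x | x ∈ Set.Ioo a b ∧ f x = 0 ∧ μ / ν < x - a ∧ μ / ν < b - x} ∧
      ∀ x₀, x₀ ∈ Set.Ioo a b → f x₀ = 0 → μ / ν < x₀ - a → μ / ν < b - x₀ →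
        φ x₀ ∈ Set.Ioo a b ∧ f (φ x₀) + g (φ x₀) = 0 ∧ |φ x₀ - x₀| < μ / ν := by
  classical
  set Z := {x | x ∈ Set.Ioo a b ∧ f x = 0 ∧ μ / ν < x - a ∧ μ / ν < b - x} with hZ_def
  have key : ∀ x₀ ∈ Z, ∃ y, f y + g y = 0 ∧ y ∈ Set.Ioo a b ∧ |y - x₀| < μ / ν ∧
      ∀ t ∈ Set.Icc (min x₀ y) (max x₀ y), |f t| ≤ μ := by
    rintro x₀ ⟨hx₀, hf0, hA, hB⟩
    have hf'ν : ν < |f' x₀| := by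
      rcases hrep x₀ hx₀ with h | h
      · rw [hf0] at h; simp at h; linarith
      · exact h
    rcases lt_abs.1 hf'ν with h | h
    · exact stmt19_aux μ ν a b hμ hν f f' g hderiv hcont hrep hgcont hg x₀ hx₀ hf0 hA hB
        (by linarith)
    · obtain ⟨y, h1, h2, h3, h4⟩ := stmt19_aux μ ν a b hμ hν (fun t => -f t) (fun t => -f' t)
        (fun t => -g t) (fun x hx => (hderiv x hx).neg) hcont.neg
        (by intro x hx; simpa [abs_neg] using hrep x hx) hgcont.neg
        (by intro x hx; simpa [abs_neg] using hg x hx) x₀ hx₀ (by simp [hf0]) hA hB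
        (by simpa using (by linarith : 0 < -f' x₀))
      refine ⟨y, by linarith [h1], h2, h3, ?_⟩
      intro t ht
      simpa [abs_neg] using h4 t ht
  set φ : ℝ → ℝ := fun x => if h : ∃ y, f y + g y = 0 ∧ y ∈ Set.Ioo a b ∧
      |y - x| < μ / ν ∧ ∀ t ∈ Set.Icc (min x y) (max x y), |f t| ≤ μ then h.choose else x
    with hφ_def
  have hspec : ∀ x₀ ∈ Z, f (φ x₀) + g (φ x₀) = 0 ∧ φ x₀ ∈ Set.Ioo a b ∧
      |φ x₀ - x₀| < μ / ν ∧ ∀ t ∈ Set.Icc (min x₀ (φ x₀)) (max x₀ (φ x₀)), |f t| ≤ μ := by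
    intro x hx
    have hex := key x hx
    simp only [hφ_def]
    rw [dif_pos hex]
    exact hex.choose_spec
  have main : ∀ x₀ ∈ Z, ∀ x₁ ∈ Z, x₀ < x₁ → φ x₀ ≠ φ x₁ := by
    intro x₀ hx₀ x₁ hx₁ hlt heq
    obtain ⟨h01, h02, h03, h04⟩ := hspec x₀ hx₀
    obtain ⟨h11, h12, h13, h14⟩ := hspec x₁ hx₁
    have hx₀I : x₀ ∈ Set.Ioo a b := hx₀.1
    have hx₁I : x₁ ∈ Set.Ioo a b := hx₁.1
    have hsubI : Set.Icc x₀ x₁ ⊆ Set.Ioo a b := fun t ht =>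
      ⟨lt_of_lt_of_le hx₀I.1 ht.1, lt_of_le_of_lt ht.2 hx₁I.2⟩
    have fcont : ContinuousOn f (Set.Icc x₀ x₁) := fun x hx =>
      (hderiv x (hsubI hx)).continuousAt.continuousWithinAt
    obtain ⟨ξ, hξ, hξ0⟩ := exists_hasDerivAt_eq_zero hlt fcont
      (by rw [hx₀.2.1, hx₁.2.1]) (fun x hx => hderiv x (hsubI (Set.Ioo_subset_Icc_self hx)))
    have hξI : ξ ∈ Set.Ioo a b := hsubI (Set.Ioo_subset_Icc_self hξ)
    have hμξ : μ < |f ξ| := by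
      rcases hrep ξ hξI with h | h
      · exact h
      · rw [hξ0] at h; simp at h; linarith
    set y := φ x₀ with hy_def
    rcases le_or_gt ξ y with h | h
    · have : ξ ∈ Set.Icc (min x₀ y) (max x₀ y) :=
        ⟨le_trans (min_le_left _ _) (le_of_lt hξ.1), le_trans h (le_max_right _ _)⟩
      have := h04 ξ this
      linarith
    · have hyx : y = φ x₁ := heq
      have : ξ ∈ Set.Icc (min x₁ (φ x₁)) (max x₁ (φ x₁)) := by
        rw [← hyx]
        exact ⟨le_trans (min_le_right _ _) (le_of_lt h), le_trans (le_of_lt hξ.2) (le_max_left _ _)⟩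
      have := h14 ξ this
      linarith
  refine ⟨φ, ?_, ?_⟩
  · intro x₀ hx₀ x₁ hx₁ heq
    by_contra hne
    rcases lt_or_gt_of_ne hne with h | h
    · exact main x₀ hx₀ x₁ hx₁ h heq
    · exact main x₁ hx₁ x₀ hx₀ h heq.symm
  · intro x₀ h1 h2 h3 h4
    have hx₀Z : x₀ ∈ Z := ⟨h1, h2, h3, h4⟩
    obtain ⟨ha1, ha2, ha3, _⟩ := hspec x₀ hx₀Z
    exact ⟨ha2, ha1, ha3⟩
end
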